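/- arXiv:2208.14424 — 2 statements merged into one kernel-verified Lean document; each statement's English description precedes it below -/
import Mathlib

section
/- Let 𝐇 be a normalized conditional entropy and let ρ_{AB} = ∑_{x=1}^N p_x σ^x_A ⊗ τ^x_B be a separable bipartite state, where (p_x)_{x=1}^N is a probability distribution and the σ^x_A and τ^x_B are states on A and B respectively. Then 𝐇(A|B)_ρ ≥ 0. -/
open Matrix Kronecker BigOperators
open scoped ENNReal ComplexOrder

noncomputable section

/-- A quantum state: a positive semidefinite matrix of trace one. -/
def IsState {α : Type} [Fintype α] (ρ : Matrix α α ℂ) : Prop :=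
  ρ.PosSemidef ∧ ρ.trace = 1

/-- The Choi matrix `∑ i j, E i j ⊗ N (E i j)` of a map between matrix algebras. -/
def choiMatrix {α β : Type} [Fintype α] [DecidableEq α] [Fintype β]
    (N : Matrix α α ℂ → Matrix β β ℂ) : Matrix (α × β) (α × β) ℂ :=
  ∑ i : α, ∑ j : α, Matrix.single i j (1 : ℂ) ⊗ₖ N (Matrix.single i j 1)

/-- A quantum channel: a linear, trace-preserving and completely positive map. -/
def IsChannel {α β : Type} [Fintype α] [DecidableEq α] [Fintype β]
    (N : Matrix α α ℂ → Matrix β β ℂ) : Prop :=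
  IsLinearMap ℂ N ∧ (∀ X, (N X).trace = X.trace) ∧ (choiMatrix N).PosSemidef

/-- Partial trace over the first tensor factor. -/
def trA {α β : Type} [Fintype α] (ρ : Matrix (α × β) (α × β) ℂ) : Matrix β β ℂ :=
  Matrix.of fun j j' => ∑ i : α, ρ (i, j) (i, j')

/-- The uniform (maximally mixed) state of dimension `n`. -/
def unif (n : ℕ) : Matrix (Fin n) (Fin n) ℂ := (n : ℂ)⁻¹ • 1

/-- The tensor extension `M ⊗ id` of a map `M` acting on the first factor. -/
def tensorIdRight {a a' : ℕ} (b : ℕ)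
    (M : Matrix (Fin a) (Fin a) ℂ → Matrix (Fin a') (Fin a') ℂ)
    (X : Matrix (Fin a × Fin b) (Fin a × Fin b) ℂ) :
    Matrix (Fin a' × Fin b) (Fin a' × Fin b) ℂ :=
  Matrix.of fun p q => M (Matrix.of fun k k' => X (k, p.2) (k', q.2)) p.1 q.1

/-- A conditionally unital bipartite channel: it sends every state of the form
`u_A ⊗ ρ_B` to a state of the form `u_C ⊗ σ_{B'}`. -/
def CondUnital {a b c b' : ℕ}
    (N : Matrix (Fin a × Fin b) (Fin a × Fin b) ℂ → Matrix (Fin c × Fin b') (Fin c × Fin b') ℂ) :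
    Prop :=
  ∀ ρB : Matrix (Fin b) (Fin b) ℂ, IsState ρB →
    ∃ σ : Matrix (Fin b') (Fin b') ℂ, IsState σ ∧ N (unif a ⊗ₖ ρB) = unif c ⊗ₖ σ

/-- An `A ↛ B'` semi-causal bipartite channel. -/
def SemiCausal {a b c b' : ℕ}
    (N : Matrix (Fin a × Fin b) (Fin a × Fin b) ℂ → Matrix (Fin c × Fin b') (Fin c × Fin b') ℂ) :
    Prop :=
  ∀ M : Matrix (Fin a) (Fin a) ℂ → Matrix (Fin a) (Fin a) ℂ, IsChannel M →
    ∀ X : Matrix (Fin a × Fin b) (Fin a × Fin b) ℂ,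
      trA (N (tensorIdRight b M X)) = trA (N X)

/-- A locally balanced channel: a quantum channel that is both conditionally unital
and `A ↛ B'` semi-causal. -/
def LocallyBalanced {a b c b' : ℕ}
    (N : Matrix (Fin a × Fin b) (Fin a × Fin b) ℂ → Matrix (Fin c × Fin b') (Fin c × Fin b') ℂ) :
    Prop :=
  IsChannel N ∧ CondUnital N ∧ SemiCausal N

/-- Conditional majorization `ρ ≻_A σ` with respect to the first system. -/
def CondMaj {a b a' b' : ℕ}
    (ρ : Matrix (Fin a × Fin b) (Fin a × Fin b) ℂ)
    (σ : Matrix (Fin a' × Fin b') (Fin a' × Fin b') ℂ) : Prop :=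
  (a' ≥ a ∧ ∃ (V : Matrix (Fin a') (Fin a) ℂ)
      (N : Matrix (Fin a × Fin b) (Fin a × Fin b) ℂ →
           Matrix (Fin a × Fin b') (Fin a × Fin b') ℂ),
      Vᴴ * V = 1 ∧ LocallyBalanced N ∧
      σ = (V ⊗ₖ (1 : Matrix (Fin b') (Fin b') ℂ)) * N ρ *
            (V ⊗ₖ (1 : Matrix (Fin b') (Fin b') ℂ))ᴴ) ∨
  (a ≥ a' ∧ ∃ (U : Matrix (Fin a) (Fin a') ℂ)
      (N : Matrix (Fin a × Fin b) (Fin a × Fin b) ℂ →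
           Matrix (Fin a × Fin b') (Fin a × Fin b') ℂ),
      Uᴴ * U = 1 ∧ LocallyBalanced N ∧
      (U ⊗ₖ (1 : Matrix (Fin b') (Fin b') ℂ)) * σ *
          (U ⊗ₖ (1 : Matrix (Fin b') (Fin b') ℂ))ᴴ = N ρ)

/-- Relaxed conditional majorization `ρ ≻^A σ`: as `CondMaj`, with the locally
balanced channel replaced by a mere conditionally unital channel. -/
def RelCondMaj {a b a' b' : ℕ}
    (ρ : Matrix (Fin a × Fin b) (Fin a × Fin b) ℂ)
    (σ : Matrix (Fin a' × Fin b') (Fin a' × Fin b') ℂ) : Prop :=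
  (a' ≥ a ∧ ∃ (V : Matrix (Fin a') (Fin a) ℂ)
      (N : Matrix (Fin a × Fin b) (Fin a × Fin b) ℂ →
           Matrix (Fin a × Fin b') (Fin a × Fin b') ℂ),
      Vᴴ * V = 1 ∧ (IsChannel N ∧ CondUnital N) ∧
      σ = (V ⊗ₖ (1 : Matrix (Fin b') (Fin b') ℂ)) * N ρ *
            (V ⊗ₖ (1 : Matrix (Fin b') (Fin b') ℂ))ᴴ) ∨
  (a ≥ a' ∧ ∃ (U : Matrix (Fin a) (Fin a') ℂ)
      (N : Matrix (Fin a × Fin b) (Fin a × Fin b) ℂ →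
           Matrix (Fin a × Fin b') (Fin a × Fin b') ℂ),
      Uᴴ * U = 1 ∧ (IsChannel N ∧ CondUnital N) ∧
      (U ⊗ₖ (1 : Matrix (Fin b') (Fin b') ℂ)) * σ *
          (U ⊗ₖ (1 : Matrix (Fin b') (Fin b') ℂ))ᴴ = N ρ)

/-- Reordering `(A × B) × (A' × B') ≃ AA' × BB'`. -/
def sysEquiv (a b a' b' : ℕ) :
    (Fin a × Fin b) × (Fin a' × Fin b') ≃ Fin (a * a') × Fin (b * b') :=
  (Equiv.prodProdProdComm (Fin a) (Fin b) (Fin a') (Fin b')).trans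
    (finProdFinEquiv.prodCongr finProdFinEquiv)

/-- The tensor product `ρ_{AB} ⊗ σ_{A'B'}` regarded as a bipartite state with
first system `AA'` and second system `BB'`. -/
def tensorState {a b a' b' : ℕ}
    (ρ : Matrix (Fin a × Fin b) (Fin a × Fin b) ℂ)
    (σ : Matrix (Fin a' × Fin b') (Fin a' × Fin b') ℂ) :
    Matrix (Fin (a * a') × Fin (b * b')) (Fin (a * a') × Fin (b * b')) ℂ :=
  Matrix.reindex (sysEquiv a b a' b') (sysEquiv a b a' b') (ρ ⊗ₖ σ)

/-- Reindexing of a matrix on a product of `Fin` types as a matrix on a single `Fin` type. -/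
def mreindex {a b : ℕ} (ρ : Matrix (Fin a × Fin b) (Fin a × Fin b) ℂ) :
    Matrix (Fin (a * b)) (Fin (a * b)) ℂ :=
  Matrix.reindex finProdFinEquiv finProdFinEquiv ρ

/-- Majorization `ρ ≻ σ` between states of possibly different dimensions. -/
def Maj {n n' : ℕ} (ρ : Matrix (Fin n) (Fin n) ℂ) (σ : Matrix (Fin n') (Fin n') ℂ) : Prop :=
  (n' ≥ n ∧ ∃ (V : Matrix (Fin n') (Fin n) ℂ)
      (N : Matrix (Fin n) (Fin n) ℂ → Matrix (Fin n) (Fin n) ℂ),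
      Vᴴ * V = 1 ∧ IsChannel N ∧ N 1 = 1 ∧ σ = V * N ρ * Vᴴ) ∨
  (n ≥ n' ∧ ∃ (U : Matrix (Fin n) (Fin n') ℂ)
      (N : Matrix (Fin n) (Fin n) ℂ → Matrix (Fin n) (Fin n) ℂ),
      Uᴴ * U = 1 ∧ IsChannel N ∧ N 1 = 1 ∧ U * σ * Uᴴ = N ρ)

/-- The conditional min-entropy
`H_min(A|B)_ρ = - log₂ min {λ ≥ 0 : λ I_A ⊗ ρ_B - ρ_{AB} ≽ 0}`. -/
def condMinEntropy {a b : ℕ} (ρ : Matrix (Fin a × Fin b) (Fin a × Fin b) ℂ) : ℝ :=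
  - Real.logb 2 (sInf {l : ℝ | 0 ≤ l ∧
      (l • ((1 : Matrix (Fin a) (Fin a) ℂ) ⊗ₖ trA ρ) - ρ).PosSemidef})

/-- The conditional min-entropy `H_min^↑(A|B)_ρ`, optimized over states `σ_B`. -/
def condMinEntropyUp {a b : ℕ} (ρ : Matrix (Fin a × Fin b) (Fin a × Fin b) ℂ) : ℝ :=
  sSup {r : ℝ | ∃ σ : Matrix (Fin b) (Fin b) ℂ, IsState σ ∧
    (∃ l : ℝ, 0 ≤ l ∧ (l • ((1 : Matrix (Fin a) (Fin a) ℂ) ⊗ₖ σ) - ρ).PosSemidef) ∧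
    r = - Real.logb 2 (sInf {l : ℝ | 0 ≤ l ∧
      (l • ((1 : Matrix (Fin a) (Fin a) ℂ) ⊗ₖ σ) - ρ).PosSemidef})}

/-- The maximally entangled state of rank `k` on `ℂ^k ⊗ ℂ^k`. -/
def maxEnt (k : ℕ) : Matrix (Fin k × Fin k) (Fin k × Fin k) ℂ :=
  Matrix.of fun p q => if p.1 = p.2 ∧ q.1 = q.2 then (k : ℂ)⁻¹ else 0

/-- The quantum channel on `m × m` matrices induced by a doubly stochastic matrix `D`,
`ρ ↦ ∑ x x', D x' x * ρ x x • E x' x'`. -/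
def dsChannel {m : ℕ} (D : Matrix (Fin m) (Fin m) ℝ) :
    Matrix (Fin m) (Fin m) ℂ → Matrix (Fin m) (Fin m) ℂ :=
  fun ρ => ∑ x : Fin m, ∑ x' : Fin m,
    (((D x' x : ℝ) : ℂ) * ρ x x) • Matrix.single x' x' (1 : ℂ)

/-- A doubly stochastic matrix: nonnegative entries, all row and column sums equal one. -/
def IsDoublyStochastic {m : ℕ} (D : Matrix (Fin m) (Fin m) ℝ) : Prop :=
  (∀ x x', 0 ≤ D x x') ∧ (∀ x, ∑ x', D x x' = 1) ∧ (∀ x', ∑ x, D x x' = 1)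

/-- The tensor product `M ⊗ F` of two (linear) maps between matrix algebras. -/
def tensorMap {m m' n n' : ℕ}
    (M : Matrix (Fin m) (Fin m) ℂ → Matrix (Fin m') (Fin m') ℂ)
    (F : Matrix (Fin n) (Fin n) ℂ → Matrix (Fin n') (Fin n') ℂ) :
    Matrix (Fin m × Fin n) (Fin m × Fin n) ℂ →
      Matrix (Fin m' × Fin n') (Fin m' × Fin n') ℂ :=
  fun X => ∑ k : Fin m, ∑ k' : Fin m, ∑ l : Fin n, ∑ l' : Fin n,
    X (k, l) (k', l') •
      (M (Matrix.single k k' 1) ⊗ₖ F (Matrix.single l l' 1))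

/-- A conditional entropy: a real-valued function on all bipartite states of all finite
dimensions that is not identically zero, reverses conditional majorization, and is
additive on tensor products. -/
structure CondEntropy where
  H : ∀ (a b : ℕ), Matrix (Fin a × Fin b) (Fin a × Fin b) ℂ → ℝ
  nontrivial : ∃ (a b : ℕ) (ρ : Matrix (Fin a × Fin b) (Fin a × Fin b) ℂ),
    IsState ρ ∧ H a b ρ ≠ 0
  mono : ∀ (a b a' b' : ℕ) (ρ : Matrix (Fin a × Fin b) (Fin a × Fin b) ℂ)
    (σ : Matrix (Fin a' × Fin b') (Fin a' × Fin b') ℂ),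
    IsState ρ → IsState σ → CondMaj ρ σ → H a b ρ ≤ H a' b' σ
  additive : ∀ (a b a' b' : ℕ) (ρ : Matrix (Fin a × Fin b) (Fin a × Fin b) ℂ)
    (σ : Matrix (Fin a' × Fin b') (Fin a' × Fin b') ℂ),
    IsState ρ → IsState σ →
    H (a * a') (b * b') (tensorState ρ σ) = H a b ρ + H a' b' σ

/-- A conditional entropy is normalized if `H(A|B) = 1` on `u⁽²⁾ ⊗ ρ_B`. -/
def CondEntropy.Normalized (E : CondEntropy) : Prop :=
  ∀ (b : ℕ) (ρB : Matrix (Fin b) (Fin b) ℂ), IsState ρB →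
    E.H 2 b (unif 2 ⊗ₖ ρB) = 1

/-- A relaxed conditional entropy: as `CondEntropy`, but monotone under the relaxed
conditional majorization. -/
structure RelCondEntropy where
  H : ∀ (a b : ℕ), Matrix (Fin a × Fin b) (Fin a × Fin b) ℂ → ℝ
  nontrivial : ∃ (a b : ℕ) (ρ : Matrix (Fin a × Fin b) (Fin a × Fin b) ℂ),
    IsState ρ ∧ H a b ρ ≠ 0
  mono : ∀ (a b a' b' : ℕ) (ρ : Matrix (Fin a × Fin b) (Fin a × Fin b) ℂ)
    (σ : Matrix (Fin a' × Fin b') (Fin a' × Fin b') ℂ),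
    IsState ρ → IsState σ → RelCondMaj ρ σ → H a b ρ ≤ H a' b' σ
  additive : ∀ (a b a' b' : ℕ) (ρ : Matrix (Fin a × Fin b) (Fin a × Fin b) ℂ)
    (σ : Matrix (Fin a' × Fin b') (Fin a' × Fin b') ℂ),
    IsState ρ → IsState σ →
    H (a * a') (b * b') (tensorState ρ σ) = H a b ρ + H a' b' σ

/-- A relaxed conditional entropy is normalized if `H(A|B) = 1` on `u⁽²⁾ ⊗ ρ_B`. -/
def RelCondEntropy.Normalized (E : RelCondEntropy) : Prop :=
  ∀ (b : ℕ) (ρB : Matrix (Fin b) (Fin b) ℂ), IsState ρB →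
    E.H 2 b (unif 2 ⊗ₖ ρB) = 1

/-- An entropy: a real-valued function on all states of all finite dimensions that is
not identically zero, reverses majorization, and is additive on tensor products. -/
structure Entropy where
  H : ∀ (n : ℕ), Matrix (Fin n) (Fin n) ℂ → ℝ
  nontrivial : ∃ (n : ℕ) (ρ : Matrix (Fin n) (Fin n) ℂ), IsState ρ ∧ H n ρ ≠ 0
  mono : ∀ (n n' : ℕ) (ρ : Matrix (Fin n) (Fin n) ℂ) (σ : Matrix (Fin n') (Fin n') ℂ),
    IsState ρ → IsState σ → Maj ρ σ → H n ρ ≤ H n' σ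
  additive : ∀ (n n' : ℕ) (ρ : Matrix (Fin n) (Fin n) ℂ) (σ : Matrix (Fin n') (Fin n') ℂ),
    IsState ρ → IsState σ → H (n * n') (mreindex (ρ ⊗ₖ σ)) = H n ρ + H n' σ

/-- A relative entropy: an `[0,∞]`-valued function on pairs of states of equal dimension
that is not identically zero, monotone under quantum channels, and additive on
tensor products. -/
structure RelEntropy where
  D : ∀ (n : ℕ), Matrix (Fin n) (Fin n) ℂ → Matrix (Fin n) (Fin n) ℂ → ℝ≥0∞
  nontrivial : ∃ (n : ℕ) (ρ σ : Matrix (Fin n) (Fin n) ℂ),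
    IsState ρ ∧ IsState σ ∧ D n ρ σ ≠ 0
  mono : ∀ (n m : ℕ) (N : Matrix (Fin n) (Fin n) ℂ → Matrix (Fin m) (Fin m) ℂ),
    IsChannel N → ∀ ρ σ : Matrix (Fin n) (Fin n) ℂ,
      IsState ρ → IsState σ → D m (N ρ) (N σ) ≤ D n ρ σ
  additive : ∀ (n m : ℕ) (ρ σ : Matrix (Fin n) (Fin n) ℂ) (ω τ : Matrix (Fin m) (Fin m) ℂ),
    IsState ρ → IsState σ → IsState ω → IsState τ →
    D (n * m) (mreindex (ρ ⊗ₖ ω)) (mreindex (σ ⊗ₖ τ)) = D n ρ σ + D m ω τ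


/-- The conditional entropy `log₂|A| − 𝐃(ρ_{AB} ‖ u_A ⊗ ρ_B)` induced by a relative
entropy `𝐃`, valued in the extended reals. -/
def RelEntropy.condH (Dd : RelEntropy) (a b : ℕ)
    (ρ : Matrix (Fin a × Fin b) (Fin a × Fin b) ℂ) : EReal :=
  ((Real.logb 2 a : ℝ) : EReal) -
    ((Dd.D (a * b) (mreindex ρ) (mreindex (unif a ⊗ₖ trA ρ)) : ℝ≥0∞) : EReal)

namespace Matrix.PosSemidef
open scoped MatrixOrder

/-- Hermitian square root of a PSD matrix. -/
def sqrt {n : Type} [Fintype n] [DecidableEq n] {A : Matrix n n ℂ} (_ : A.PosSemidef) :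
    Matrix n n ℂ := CFC.sqrt A

lemma posSemidef_sqrt {n : Type} [Fintype n] [DecidableEq n] {A : Matrix n n ℂ}
    (hA : A.PosSemidef) : hA.sqrt.PosSemidef := (CFC.sqrt_nonneg A).posSemidef

lemma sqrt_mul_self {n : Type} [Fintype n] [DecidableEq n] {A : Matrix n n ℂ}
    (hA : A.PosSemidef) : hA.sqrt * hA.sqrt = A := CFC.sqrt_mul_sqrt_self A hA.nonneg

end Matrix.PosSemidef

namespace Aux

set_option linter.unusedSectionVars false
variable {α β γ ι : Type} [Fintype α] [Fintype β] [Fintype ι] [DecidableEq α] [DecidableEq β]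

/-- Kraus-form map. -/
def kraus (L : ι → Matrix β α ℂ) (X : Matrix α α ℂ) : Matrix β β ℂ :=
  ∑ s, L s * X * (L s)ᴴ

lemma kraus_linear (L : ι → Matrix β α ℂ) : IsLinearMap ℂ (kraus L) := by
  constructor
  · intro X Y
    simp [kraus, Matrix.mul_add, Matrix.add_mul, Finset.sum_add_distrib]
  · intro c X
    simp [kraus, Matrix.mul_smul, Matrix.smul_mul, Finset.smul_sum]

lemma kraus_trace (L : ι → Matrix β α ℂ) (h : ∑ s, (L s)ᴴ * L s = 1)
    (X : Matrix α α ℂ) : (kraus L X).trace = X.trace := by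
  have : ∀ s, (L s * X * (L s)ᴴ).trace = ((L s)ᴴ * L s * X).trace := by
    intro s
    rw [Matrix.trace_mul_cycle]
  calc (kraus L X).trace = ∑ s, (L s * X * (L s)ᴴ).trace := by
        simp [kraus, Matrix.trace_sum]
    _ = ∑ s, ((L s)ᴴ * L s * X).trace := by simp [this]
    _ = ((∑ s, (L s)ᴴ * L s) * X).trace := by
        rw [Finset.sum_mul, Matrix.trace_sum]
    _ = X.trace := by rw [h, Matrix.one_mul]

lemma choiMatrix_apply (N : Matrix α α ℂ → Matrix β β ℂ)
    (i j : α) (b b' : β) :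
    choiMatrix N (i, b) (j, b') = N (Matrix.single i j 1) b b' := by
  simp [choiMatrix, Matrix.sum_apply, kroneckerMap_apply, Matrix.single,
    Matrix.of_apply, ite_and, Finset.sum_ite_eq, Finset.sum_ite_eq']

lemma kraus_stdBasis_apply (L : ι → Matrix β α ℂ) (i j : α) (b b' : β) :
    kraus L (Matrix.single i j 1) b b' = ∑ s, L s b i * star (L s b' j) := by
  simp [kraus, Matrix.sum_apply, Matrix.mul_apply, Matrix.single,
    Matrix.conjTranspose_apply, Matrix.of_apply, ite_and, Finset.mul_sum,
    Finset.sum_ite_eq, Finset.sum_ite_eq']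


lemma posSemidef_sum {n : Type} [Fintype n] (s : Finset ι) (f : ι → Matrix n n ℂ)
    (h : ∀ i ∈ s, (f i).PosSemidef) : (∑ i ∈ s, f i).PosSemidef :=
  Finset.sum_induction f _ (fun _ _ ha hb => ha.add hb) Matrix.PosSemidef.zero h

lemma choi_kraus_posSemidef (L : ι → Matrix β α ℂ) :
    (choiMatrix (kraus L)).PosSemidef := by
  have : choiMatrix (kraus L)
      = ∑ s, (Matrix.of fun (p : α × β) (_ : Unit) => L s p.2 p.1) *
          (Matrix.of fun (p : α × β) (_ : Unit) => L s p.2 p.1)ᴴ := by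
    ext ⟨i, b⟩ ⟨j, b'⟩
    rw [choiMatrix_apply, kraus_stdBasis_apply]
    simp [Matrix.sum_apply, Matrix.mul_apply, Matrix.conjTranspose_apply]
  rw [this]
  exact posSemidef_sum _ _ fun s _ => Matrix.posSemidef_self_mul_conjTranspose _

lemma isChannel_kraus (L : ι → Matrix β α ℂ) (h : ∑ s, (L s)ᴴ * L s = 1) :
    IsChannel (kraus L) :=
  ⟨kraus_linear L, kraus_trace L h, choi_kraus_posSemidef L⟩


lemma stdBasis_conj_std (X : Matrix α α ℂ) (m m' : β) (k k' : α) :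
    Matrix.single m k (1:ℂ) * X * Matrix.single k' m' (1:ℂ) =
      X k k' • Matrix.single m m' (1:ℂ) := by
  ext i j
  simp [Matrix.mul_apply, Matrix.single, ite_and, Finset.mul_sum,
    Finset.sum_ite_eq, Finset.sum_ite_eq', mul_comm]
  by_cases h1 : m = i <;> by_cases h2 : m' = j <;> simp [h1, h2]

lemma stdBasis_conjTranspose (i : α) (j : β) :
    (Matrix.single i j (1:ℂ))ᴴ = Matrix.single j i 1 := by
  ext k l
  simp [Matrix.conjTranspose_apply, Matrix.single, ite_and]
  split <;> split <;> simp_all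

omit [DecidableEq β] in
lemma sum_stdBasis_diag : ∑ m : α, Matrix.single m m (1:ℂ) = 1 := by
  ext i j
  rw [Matrix.sum_apply]
  simp [Matrix.single, Matrix.one_apply, ite_and, Finset.sum_ite_eq',
    eq_comm]

omit [DecidableEq α] [DecidableEq β] in
lemma kron_conjT {a b c d : Type} [Fintype a] [Fintype b] [Fintype c] [Fintype d]
    (A : Matrix a b ℂ) (B : Matrix c d ℂ) : (A ⊗ₖ B)ᴴ = Aᴴ ⊗ₖ Bᴴ := by
  ext ⟨i, j⟩ ⟨k, l⟩
  simp [Matrix.conjTranspose_apply, Matrix.kroneckerMap_apply, star_mul', mul_comm]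

omit [Fintype α] [Fintype β] [DecidableEq α] [DecidableEq β] in
lemma sum_kron {a b c d : Type} (s : Finset ι) (f : ι → Matrix a b ℂ)
    (B : Matrix c d ℂ) : (∑ i ∈ s, f i) ⊗ₖ B = ∑ i ∈ s, f i ⊗ₖ B := by
  ext ⟨i, j⟩ ⟨k, l⟩
  simp [Matrix.kroneckerMap_apply, Matrix.sum_apply, Finset.sum_mul]

omit [Fintype α] [Fintype β] [DecidableEq α] [DecidableEq β] in
lemma kron_sum {a b c d : Type} (s : Finset ι) (A : Matrix a b ℂ)
    (f : ι → Matrix c d ℂ) : A ⊗ₖ (∑ i ∈ s, f i) = ∑ i ∈ s, A ⊗ₖ f i := by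
  ext ⟨i, j⟩ ⟨k, l⟩
  simp [Matrix.kroneckerMap_apply, Matrix.sum_apply, Finset.mul_sum]

omit [Fintype α] [Fintype β] [DecidableEq α] [DecidableEq β] in
lemma smul_kron' {a b c d : Type} (r : ℂ) (A : Matrix a b ℂ) (B : Matrix c d ℂ) :
    (r • A) ⊗ₖ B = r • (A ⊗ₖ B) := Matrix.smul_kronecker r A B

lemma trace_submatrix_equiv {n m : Type} [Fintype n] [Fintype m] (e : m ≃ n)
    (A : Matrix n n ℂ) : (A.submatrix e e).trace = A.trace := by
  simp only [Matrix.trace, Matrix.diag, Matrix.submatrix_apply]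
  exact Equiv.sum_comp e fun i => A i i

/-- smul of a PSD matrix by a nonneg real. -/
lemma PosSemidef.smul_real {A : Matrix α α ℂ} (hA : A.PosSemidef) {c : ℝ}
    (hc : 0 ≤ c) : (c • A).PosSemidef := by
  have h : c • A = ((Real.sqrt c : ℝ) • hA.sqrt)ᴴ * ((Real.sqrt c : ℝ) • hA.sqrt) := by
    rw [Matrix.conjTranspose_smul, star_trivial, Matrix.smul_mul, Matrix.mul_smul,
      hA.posSemidef_sqrt.isHermitian.eq, hA.sqrt_mul_self, smul_smul,
      Real.mul_self_sqrt hc]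
  rw [h]
  exact Matrix.posSemidef_conjTranspose_mul_self _

lemma PosSemidef.smul_nonneg {A : Matrix α α ℂ} (hA : A.PosSemidef) {c : ℂ}
    (hc : 0 ≤ c) : (c • A).PosSemidef := by
  obtain ⟨hre, him⟩ := Complex.le_def.mp hc
  have : c = ((c.re : ℝ) : ℂ) := by
    apply Complex.ext <;> simp [← him]
  have h2 : c • A = (c.re : ℝ) • A := by
    ext i j
    rw [this]
    simp [Complex.real_smul]
  rw [h2]
  exact PosSemidef.smul_real hA (by simpa using hre)

lemma psd_diag_nonneg {A : Matrix α α ℂ} (hA : A.PosSemidef) (i : α) :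
    0 ≤ A i i := by
  exact hA.diag_nonneg

lemma posSemidef_kron {A : Matrix α α ℂ} {B : Matrix β β ℂ}
    (hA : A.PosSemidef) (hB : B.PosSemidef) : (A ⊗ₖ B).PosSemidef := by
  have : A ⊗ₖ B = (hA.sqrt ⊗ₖ hB.sqrt) * (hA.sqrt ⊗ₖ hB.sqrt)ᴴ := by
    rw [kron_conjT, ← Matrix.mul_kronecker_mul,
      hA.posSemidef_sqrt.isHermitian.eq, hB.posSemidef_sqrt.isHermitian.eq,
      hA.sqrt_mul_self, hB.sqrt_mul_self]
  rw [this]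
  exact Matrix.posSemidef_self_mul_conjTranspose _

lemma IsState.kron {A : Matrix α α ℂ} {B : Matrix β β ℂ}
    (hA : IsState A) (hB : IsState B) : IsState (A ⊗ₖ B) :=
  ⟨posSemidef_kron hA.1 hB.1, by rw [Matrix.trace_kronecker, hA.2, hB.2, mul_one]⟩


lemma one_sub_posSemidef {A : Matrix α α ℂ} (hA : A.PosSemidef)
    (htr : A.trace = 1) : ((1 : Matrix α α ℂ) - A).PosSemidef := by
  have hH := hA.isHermitian
  have hUstar : star (hH.eigenvectorUnitary : Matrix α α ℂ) *
      (hH.eigenvectorUnitary : Matrix α α ℂ) = 1 :=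
    Unitary.coe_star_mul_self hH.eigenvectorUnitary
  have hUU : (hH.eigenvectorUnitary : Matrix α α ℂ) *
      star (hH.eigenvectorUnitary : Matrix α α ℂ) = 1 :=
    Matrix.mem_unitaryGroup_iff.mp hH.eigenvectorUnitary.2
  have hsumC : ∑ i, (hH.eigenvalues i : ℂ) = 1 := by
    have h0 := htr
    conv_lhs at h0 => rw [hH.spectral_theorem, Unitary.conjStarAlgAut_apply]
    rw [Matrix.trace_mul_cycle, hUstar, Matrix.one_mul, Matrix.trace_diagonal] at h0
    simpa using h0
  have hsum : ∑ i, hH.eigenvalues i = 1 := by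
    have := hsumC
    push_cast at this
    exact_mod_cast this
  have hle : ∀ i, hH.eigenvalues i ≤ 1 := fun i =>
    hsum ▸ Finset.single_le_sum (fun j _ => hA.eigenvalues_nonneg j) (Finset.mem_univ i)
  have key : (1 : Matrix α α ℂ) - A =
      (hH.eigenvectorUnitary : Matrix α α ℂ) *
        Matrix.diagonal (fun i => (RCLike.ofReal (1 - hH.eigenvalues i) : ℂ)) *
        (hH.eigenvectorUnitary : Matrix α α ℂ)ᴴ := by
    have hdiag : Matrix.diagonal (fun i => (RCLike.ofReal (1 - hH.eigenvalues i) : ℂ)) =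
        (1 : Matrix α α ℂ) - Matrix.diagonal (RCLike.ofReal ∘ hH.eigenvalues) := by
      rw [← Matrix.diagonal_one, Matrix.diagonal_sub]
      congr 1
      funext i
      simp
    rw [hdiag, Matrix.mul_sub, Matrix.sub_mul, Matrix.mul_one,
      ← Matrix.star_eq_conjTranspose, hUU]
    congr 1
    conv_lhs => rw [hH.spectral_theorem, Unitary.conjStarAlgAut_apply]
  rw [key]
  refine Matrix.PosSemidef.mul_mul_conjTranspose_same ?_ _
  refine Matrix.PosSemidef.diagonal fun i => ?_
  have : ((hH.eigenvalues i : ℝ) : ℂ) ≤ ((1 : ℝ) : ℂ) := Complex.real_le_real.mpr (hle i)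
  simpa using this


lemma kraus_prep_term (S : Matrix β β ℂ) (X : Matrix α α ℂ) (k : α) (m : β) :
    (S * Matrix.single m k (1:ℂ)) * X * (S * Matrix.single m k (1:ℂ))ᴴ
      = X k k • (S * Matrix.single m m (1:ℂ) * Sᴴ) := by
  rw [Matrix.conjTranspose_mul, stdBasis_conjTranspose]
  have : S * Matrix.single m k (1:ℂ) * X *
      (Matrix.single k m (1:ℂ) * Sᴴ)
      = S * (Matrix.single m k (1:ℂ) * X * Matrix.single k m (1:ℂ)) * Sᴴ := by
    simp only [Matrix.mul_assoc]
  rw [this, stdBasis_conj_std, Matrix.mul_smul, Matrix.smul_mul]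

lemma kraus_prep_apply (S : Matrix β β ℂ) (X : Matrix α α ℂ) :
    kraus (fun km : α × β => S * Matrix.single km.2 km.1 (1:ℂ)) X
      = X.trace • (S * Sᴴ) := by
  unfold kraus
  rw [Fintype.sum_prod_type]
  have : ∀ k : α, ∑ m : β,
      (S * Matrix.single m k (1:ℂ)) * X * (S * Matrix.single m k (1:ℂ))ᴴ
      = X k k • (S * Sᴴ) := by
    intro k
    calc ∑ m : β, (S * Matrix.single m k (1:ℂ)) * X *
          (S * Matrix.single m k (1:ℂ))ᴴ
        = ∑ m : β, X k k • (S * Matrix.single m m (1:ℂ) * Sᴴ) := by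
          exact Finset.sum_congr rfl fun m _ => kraus_prep_term S X k m
      _ = X k k • ((S * ∑ m : β, Matrix.single m m (1:ℂ)) * Sᴴ) := by
          rw [← Finset.smul_sum, ← Finset.sum_mul, ← Finset.mul_sum]
      _ = X k k • (S * Sᴴ) := by rw [sum_stdBasis_diag, Matrix.mul_one]
  rw [Finset.sum_congr rfl fun k _ => this k, ← Finset.sum_smul]
  rfl

lemma kraus_prep_tp (S : Matrix β β ℂ) (h : (S * Sᴴ).trace = 1) :
    ∑ km : α × β, (S * Matrix.single km.2 km.1 (1:ℂ))ᴴ *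
      (S * Matrix.single km.2 km.1 (1:ℂ)) = 1 := by
  rw [Fintype.sum_prod_type]
  have hterm : ∀ (k : α) (m : β),
      (S * Matrix.single m k (1:ℂ))ᴴ * (S * Matrix.single m k (1:ℂ))
      = (Sᴴ * S) m m • Matrix.single k k (1:ℂ) := by
    intro k m
    rw [Matrix.conjTranspose_mul, stdBasis_conjTranspose]
    have : Matrix.single k m (1:ℂ) * Sᴴ * (S * Matrix.single m k (1:ℂ))
        = Matrix.single k m (1:ℂ) * (Sᴴ * S) * Matrix.single m k (1:ℂ) := by
      simp only [Matrix.mul_assoc]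
    rw [this, stdBasis_conj_std]
  have htr : ∑ m : β, (Sᴴ * S) m m = 1 := by
    have : (Sᴴ * S).trace = 1 := by rwa [Matrix.trace_mul_comm] at h
    simpa [Matrix.trace, Matrix.diag] using this
  calc ∑ k : α, ∑ m : β, (S * Matrix.single m k (1:ℂ))ᴴ *
        (S * Matrix.single m k (1:ℂ))
      = ∑ k : α, ∑ m : β, (Sᴴ * S) m m • Matrix.single k k (1:ℂ) := by
        exact Finset.sum_congr rfl fun k _ => Finset.sum_congr rfl fun m _ => hterm k m
    _ = ∑ k : α, (1 : ℂ) • Matrix.single k k (1:ℂ) := by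
        refine Finset.sum_congr rfl fun k _ => ?_
        rw [← Finset.sum_smul, htr]
    _ = 1 := by simp [sum_stdBasis_diag]


lemma unif_one : unif 1 = 1 := by simp [unif]

lemma trace_fin_one (Y : Matrix (Fin 1) (Fin 1) ℂ) : Y.trace = Y 0 0 := by
  simp [Matrix.trace, Matrix.diag]

lemma channel_fin_one {M : Matrix (Fin 1) (Fin 1) ℂ → Matrix (Fin 1) (Fin 1) ℂ}
    (hM : IsChannel M) (Y : Matrix (Fin 1) (Fin 1) ℂ) : M Y = Y := by
  ext i j
  have hi : i = 0 := Subsingleton.elim _ _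
  have hj : j = 0 := Subsingleton.elim _ _
  subst hi; subst hj
  have := hM.2.1 Y
  rw [trace_fin_one, trace_fin_one] at this
  exact this

lemma tensorIdRight_fin_one {b : ℕ}
    {M : Matrix (Fin 1) (Fin 1) ℂ → Matrix (Fin 1) (Fin 1) ℂ} (hM : IsChannel M)
    (X : Matrix (Fin 1 × Fin b) (Fin 1 × Fin b) ℂ) : tensorIdRight b M X = X := by
  ext p q
  show M (Matrix.of fun k k' => X (k, p.2) (k', q.2)) p.1 q.1 = X p q
  rw [channel_fin_one hM]
  rfl

lemma semiCausal_of_one {b c b' : ℕ}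
    (N : Matrix (Fin 1 × Fin b) (Fin 1 × Fin b) ℂ →
      Matrix (Fin c × Fin b') (Fin c × Fin b') ℂ) : SemiCausal N := by
  intro M hM X
  rw [tensorIdRight_fin_one hM]

def bslice {n : ℕ} (ρ : Matrix (Fin 1 × Fin n) (Fin 1 × Fin n) ℂ) :
    Matrix (Fin n) (Fin n) ℂ :=
  ρ.submatrix (Prod.mk 0) (Prod.mk 0)

lemma unif_one_kron_bslice {n : ℕ} (ρ : Matrix (Fin 1 × Fin n) (Fin 1 × Fin n) ℂ) :
    unif 1 ⊗ₖ bslice ρ = ρ := by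
  rw [unif_one]
  ext ⟨i, j⟩ ⟨i', j'⟩
  have hi : i = 0 := Subsingleton.elim _ _
  have hi' : i' = 0 := Subsingleton.elim _ _
  subst hi; subst hi'
  simp [Matrix.kroneckerMap_apply, bslice, Matrix.one_apply]

lemma isState_bslice {n : ℕ} {ρ : Matrix (Fin 1 × Fin n) (Fin 1 × Fin n) ℂ}
    (h : IsState ρ) : IsState (bslice ρ) := by
  refine ⟨h.1.submatrix _, ?_⟩
  rw [← h.2]
  simp [Matrix.trace, Matrix.diag, Fintype.sum_prod_type, Fin.sum_univ_one]
  exact Finset.sum_congr rfl fun x _ => rfl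

lemma trace_unif_kron {a n : ℕ} (ha : a ≠ 0) {ρB : Matrix (Fin n) (Fin n) ℂ}
    (h : ρB.trace = 1) : (unif a ⊗ₖ ρB).trace = 1 := by
  rw [Matrix.trace_kronecker, h, mul_one, unif, Matrix.trace_smul, Matrix.trace_one]
  simp
  rw [inv_mul_cancel₀]
  exact_mod_cast ha

lemma IsState.unif_kron {a n : ℕ} (ha : a ≠ 0) {ρB : Matrix (Fin n) (Fin n) ℂ}
    (h : IsState ρB) : IsState (unif a ⊗ₖ ρB) := by
  refine ⟨posSemidef_kron ?_ h.1, trace_unif_kron ha h.2⟩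
  unfold unif
  refine PosSemidef.smul_nonneg Matrix.PosSemidef.one ?_
  rw [show ((a : ℂ))⁻¹ = (((a : ℝ)⁻¹ : ℝ) : ℂ) by push_cast; ring]
  rw [Complex.zero_le_real]
  positivity

lemma condMaj_trivA {n n' : ℕ} (ρ : Matrix (Fin 1 × Fin n) (Fin 1 × Fin n) ℂ)
    (σ : Matrix (Fin 1 × Fin n') (Fin 1 × Fin n') ℂ)
    (hρ : IsState ρ) (hσ : IsState σ) : CondMaj ρ σ := by
  have hS : hσ.1.sqrt * hσ.1.sqrtᴴ = σ := by
    rw [hσ.1.posSemidef_sqrt.isHermitian.eq, hσ.1.sqrt_mul_self]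
  have hStr : (hσ.1.sqrt * hσ.1.sqrtᴴ).trace = 1 := by rw [hS, hσ.2]
  set Nc := kraus (fun km : (Fin 1 × Fin n) × (Fin 1 × Fin n') =>
    hσ.1.sqrt * Matrix.single km.2 km.1 (1:ℂ)) with hNc
  have hNapp : ∀ X, Nc X = X.trace • σ := by
    intro X
    rw [hNc, kraus_prep_apply, hS]
  left
  refine ⟨le_refl 1, 1, Nc, by simp, ⟨?_, ?_, semiCausal_of_one _⟩, ?_⟩
  · exact isChannel_kraus _ (kraus_prep_tp _ hStr)
  · intro ρB hρB
    refine ⟨bslice σ, isState_bslice hσ, ?_⟩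
    rw [hNapp, trace_unif_kron one_ne_zero hρB.2, one_smul, unif_one_kron_bslice]
  · rw [Matrix.one_kronecker_one, Matrix.one_mul, Matrix.conjTranspose_one,
      Matrix.mul_one, hNapp, hρ.2, one_smul]

lemma isState_tensorState {a b a' b' : ℕ}
    {ρ : Matrix (Fin a × Fin b) (Fin a × Fin b) ℂ}
    {σ : Matrix (Fin a' × Fin b') (Fin a' × Fin b') ℂ}
    (hρ : IsState ρ) (hσ : IsState σ) : IsState (tensorState ρ σ) := by
  rw [tensorState, Matrix.reindex_apply]
  exact ⟨(posSemidef_kron hρ.1 hσ.1).submatrix _,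
    by rw [trace_submatrix_equiv, Matrix.trace_kronecker, hρ.2, hσ.2, mul_one]⟩

lemma H_trivA_eq (E : CondEntropy) {n n' : ℕ}
    (ρ : Matrix (Fin 1 × Fin n) (Fin 1 × Fin n) ℂ)
    (σ : Matrix (Fin 1 × Fin n') (Fin 1 × Fin n') ℂ)
    (hρ : IsState ρ) (hσ : IsState σ) : E.H 1 n ρ = E.H 1 n' σ :=
  le_antisymm (E.mono 1 n 1 n' ρ σ hρ hσ (condMaj_trivA ρ σ hρ hσ))
    (E.mono 1 n' 1 n σ ρ hσ hρ (condMaj_trivA σ ρ hσ hρ))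

lemma H_trivA_zero (E : CondEntropy) {n : ℕ}
    (ρ : Matrix (Fin 1 × Fin n) (Fin 1 × Fin n) ℂ) (hρ : IsState ρ) :
    E.H 1 n ρ = 0 := by
  have hT : IsState (tensorState ρ ρ) := isState_tensorState hρ hρ
  have h2 := E.additive 1 n 1 n ρ ρ hρ hρ
  have h3 : E.H (1 * 1) (n * n) (tensorState ρ ρ) = E.H 1 n ρ :=
    H_trivA_eq E (tensorState ρ ρ) ρ hT hρ
  linarith


lemma kraus_one_apply {n : Type} [Fintype n] [DecidableEq n] (X : Matrix n n ℂ) :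
    kraus (fun _ : Unit => (1 : Matrix n n ℂ)) X = X := by
  simp [kraus]

lemma condMaj_embed {a n : ℕ} [NeZero a] (ω : Matrix (Fin n) (Fin n) ℂ)
    (hω : IsState ω) :
    CondMaj (unif 1 ⊗ₖ ω) ((Matrix.single (0 : Fin a) 0 (1:ℂ)) ⊗ₖ ω) := by
  set V : Matrix (Fin a) (Fin 1) ℂ :=
    Matrix.of fun i _ => if i = 0 then (1:ℂ) else 0 with hV
  have hVV : Vᴴ * V = 1 := by
    ext i j
    have hi : i = 0 := Subsingleton.elim _ _
    have hj : j = 0 := Subsingleton.elim _ _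
    subst hi; subst hj
    simp [hV, Matrix.mul_apply, Matrix.conjTranspose_apply, Matrix.one_apply,
      apply_ite (star : ℂ → ℂ), Finset.sum_ite_eq']
  have hVVH : V * Vᴴ = Matrix.single (0 : Fin a) 0 (1:ℂ) := by
    ext i i'
    simp only [hV, Matrix.mul_apply, Matrix.conjTranspose_apply, Matrix.of_apply,
      Fin.sum_univ_one, Matrix.single, ite_and]
    by_cases h1 : i = 0 <;> by_cases h2 : i' = 0 <;> simp [h1, h2, eq_comm]
  left
  refine ⟨Nat.one_le_iff_ne_zero.mpr (NeZero.ne a), V,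
    kraus (fun _ : Unit => (1 : Matrix (Fin 1 × Fin n) (Fin 1 × Fin n) ℂ)),
    hVV, ⟨isChannel_kraus _ (by simp), ?_, semiCausal_of_one _⟩, ?_⟩
  · intro ρB hρB
    exact ⟨ρB, hρB, by rw [kraus_one_apply]⟩
  · rw [kraus_one_apply, unif_one, kron_conjT, Matrix.conjTranspose_one,
      ← Matrix.mul_kronecker_mul, ← Matrix.mul_kronecker_mul, Matrix.mul_one,
      Matrix.one_mul, Matrix.mul_one, hVVH]


lemma sum_prep_row (S : Matrix β β ℂ) (X : Matrix α α ℂ) (k : α) :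
    ∑ m : β, (S * Matrix.single m k (1:ℂ)) * X *
      (S * Matrix.single m k (1:ℂ))ᴴ = X k k • (S * Sᴴ) := by
  calc ∑ m : β, (S * Matrix.single m k (1:ℂ)) * X *
        (S * Matrix.single m k (1:ℂ))ᴴ
      = ∑ m : β, X k k • (S * Matrix.single m m (1:ℂ) * Sᴴ) :=
        Finset.sum_congr rfl fun m _ => kraus_prep_term S X k m
    _ = X k k • ((S * ∑ m : β, Matrix.single m m (1:ℂ)) * Sᴴ) := by
        rw [← Finset.smul_sum, ← Finset.sum_mul, ← Finset.mul_sum]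
    _ = X k k • (S * Sᴴ) := by rw [sum_stdBasis_diag, Matrix.mul_one]

/-- The Kraus family of the unital channel sending `E_{k0 k0}` to `S Sᴴ`. -/
def lamFam (S T : Matrix α α ℂ) (k0 : α) : (α ⊕ α × α) → Matrix α α ℂ :=
  Sum.elim (fun m => S * Matrix.single m k0 (1:ℂ))
    (fun mk => if mk.2 = k0 then 0 else T * Matrix.single mk.1 mk.2 (1:ℂ))

omit [DecidableEq β] [Fintype β] in
lemma lambda_apply (S T : Matrix α α ℂ) (k0 : α) (Y : Matrix α α ℂ) :
    kraus (lamFam S T k0) Y = Y k0 k0 • (S * Sᴴ) +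
      (∑ k ∈ Finset.univ.erase k0, Y k k) • (T * Tᴴ) := by
  unfold kraus lamFam
  rw [Fintype.sum_sum_type]
  congr 1
  · exact sum_prep_row S Y k0
  · calc ∑ mk : α × α, (if mk.2 = k0 then 0 else T * Matrix.single mk.1 mk.2 (1:ℂ)) * Y *
          (if mk.2 = k0 then 0 else T * Matrix.single mk.1 mk.2 (1:ℂ))ᴴ
        = ∑ k : α, ∑ m : α, (if k = k0 then 0 else
            (T * Matrix.single m k (1:ℂ)) * Y * (T * Matrix.single m k (1:ℂ))ᴴ) := by
          rw [Fintype.sum_prod_type, Finset.sum_comm]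
          refine Finset.sum_congr rfl fun k _ => Finset.sum_congr rfl fun m _ => ?_
          split <;> simp
      _ = ∑ k : α, (if k = k0 then 0 else Y k k • (T * Tᴴ)) := by
          refine Finset.sum_congr rfl fun k _ => ?_
          split
          · simp
          · exact sum_prep_row T Y k
      _ = ∑ k ∈ Finset.univ.erase k0, Y k k • (T * Tᴴ) := by
          rw [← Finset.add_sum_erase _ _ (Finset.mem_univ k0), if_pos rfl, zero_add]
          exact Finset.sum_congr rfl fun k hk => if_neg (Finset.ne_of_mem_erase hk)
      _ = (∑ k ∈ Finset.univ.erase k0, Y k k) • (T * Tᴴ) := by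
          rw [Finset.sum_smul]

lemma prep_col_tp (S : Matrix β β ℂ) (k : α) (m : β) :
    (S * Matrix.single m k (1:ℂ))ᴴ * (S * Matrix.single m k (1:ℂ))
      = (Sᴴ * S) m m • Matrix.single k k (1:ℂ) := by
  rw [Matrix.conjTranspose_mul, stdBasis_conjTranspose]
  have : Matrix.single k m (1:ℂ) * Sᴴ * (S * Matrix.single m k (1:ℂ))
      = Matrix.single k m (1:ℂ) * (Sᴴ * S) * Matrix.single m k (1:ℂ) := by
    simp only [Matrix.mul_assoc]
  rw [this, stdBasis_conj_std]

lemma trace_eq_diag_sum {n : Type} [Fintype n] (A : Matrix n n ℂ) :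
    A.trace = ∑ i, A i i := rfl

omit [DecidableEq β] [Fintype β] in
lemma lambda_tp (S T : Matrix α α ℂ) (k0 : α) (hS : (Sᴴ * S).trace = 1)
    (hT : Finset.univ.erase k0 ≠ ∅ → (Tᴴ * T).trace = (1:ℂ)) :
    ∑ s, (lamFam S T k0 s)ᴴ * lamFam S T k0 s = 1 := by
  unfold lamFam
  rw [Fintype.sum_sum_type]
  simp only [Sum.elim_inl, Sum.elim_inr]
  have h1 : ∑ m : α, (S * Matrix.single m k0 (1:ℂ))ᴴ *
      (S * Matrix.single m k0 (1:ℂ)) = Matrix.single k0 k0 (1:ℂ) := by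
    calc ∑ m : α, (S * Matrix.single m k0 (1:ℂ))ᴴ * (S * Matrix.single m k0 (1:ℂ))
        = ∑ m : α, (Sᴴ * S) m m • Matrix.single k0 k0 (1:ℂ) :=
          Finset.sum_congr rfl fun m _ => prep_col_tp S k0 m
      _ = (Sᴴ * S).trace • Matrix.single k0 k0 (1:ℂ) := by
          rw [trace_eq_diag_sum, Finset.sum_smul]
      _ = _ := by rw [hS, one_smul]
  have h2 : ∑ mk : α × α, (if mk.2 = k0 then 0 else T * Matrix.single mk.1 mk.2 (1:ℂ))ᴴ *
      (if mk.2 = k0 then 0 else T * Matrix.single mk.1 mk.2 (1:ℂ))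
      = ∑ k ∈ Finset.univ.erase k0, Matrix.single k k (1:ℂ) := by
    calc ∑ mk : α × α, (if mk.2 = k0 then 0 else T * Matrix.single mk.1 mk.2 (1:ℂ))ᴴ *
          (if mk.2 = k0 then 0 else T * Matrix.single mk.1 mk.2 (1:ℂ))
        = ∑ k : α, ∑ m : α, (if k = k0 then 0 else
            (Tᴴ * T) m m • Matrix.single k k (1:ℂ)) := by
          rw [Fintype.sum_prod_type, Finset.sum_comm]
          refine Finset.sum_congr rfl fun k _ => Finset.sum_congr rfl fun m _ => ?_
          split
          · simp
          · exact prep_col_tp T k m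
      _ = ∑ k : α, (if k = k0 then 0 else (Tᴴ * T).trace • Matrix.single k k (1:ℂ)) := by
          refine Finset.sum_congr rfl fun k _ => ?_
          split
          · simp
          · rw [trace_eq_diag_sum, Finset.sum_smul]
      _ = ∑ k ∈ Finset.univ.erase k0, (Tᴴ * T).trace • Matrix.single k k (1:ℂ) := by
          rw [← Finset.add_sum_erase _ _ (Finset.mem_univ k0), if_pos rfl, zero_add]
          exact Finset.sum_congr rfl fun k hk => if_neg (Finset.ne_of_mem_erase hk)
      _ = ∑ k ∈ Finset.univ.erase k0, Matrix.single k k (1:ℂ) := by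
          refine Finset.sum_congr rfl fun k hk => ?_
          rw [hT (Finset.ne_empty_of_mem hk), one_smul]
  rw [h1, h2, ← sum_stdBasis_diag (α := α)]
  exact Finset.add_sum_erase _ (fun k => Matrix.single k k (1:ℂ)) (Finset.mem_univ k0)


/-- The `x`-th diagonal block on the second factor. -/
def blk {αt δt : Type} (x : δt) (X : Matrix (αt × δt) (αt × δt) ℂ) :
    Matrix αt αt ℂ :=
  Matrix.of fun k k' => X (k, x) (k', x)

lemma kron_prep_conj {αt γt δt : Type} [Fintype αt] [Fintype γt] [Fintype δt]
    [DecidableEq γt] [DecidableEq δt]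
    (A : Matrix αt αt ℂ) (R : Matrix γt γt ℂ) (m' : γt) (x : δt)
    (X : Matrix (αt × δt) (αt × δt) ℂ) :
    (A ⊗ₖ (R * Matrix.single m' x (1:ℂ))) * X *
      (A ⊗ₖ (R * Matrix.single m' x (1:ℂ)))ᴴ
      = (A * blk x X * Aᴴ) ⊗ₖ (R * Matrix.single m' m' (1:ℂ) * Rᴴ) := by
  ext ⟨i, j⟩ ⟨i', j'⟩
  simp only [Matrix.mul_apply, Matrix.kroneckerMap_apply, Matrix.conjTranspose_apply,
    Fintype.sum_prod_type, Matrix.single, Matrix.of_apply, blk,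
    mul_ite, ite_mul, mul_one, mul_zero, zero_mul, one_mul, star_mul', apply_ite (star : ℂ → ℂ),
    star_zero, star_one, ite_and, Finset.sum_ite_eq, Finset.sum_ite_eq',
    Finset.mul_sum, Finset.sum_mul, Finset.mem_univ, if_true]
  exact Finset.sum_congr rfl fun _ _ => Finset.sum_congr rfl fun _ _ => by ring


lemma real_smul_mat {n m : Type} (r : ℝ) (M : Matrix n m ℂ) :
    r • M = ((r : ℂ)) • M := by
  ext i j
  simp [Complex.real_smul]

omit [Fintype α] [DecidableEq α] in
lemma trA_sum {βt : Type} [Fintype βt] (s : Finset ι)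
    (f : ι → Matrix (βt × α) (βt × α) ℂ) :
    trA (∑ i ∈ s, f i) = ∑ i ∈ s, trA (f i) := by
  ext j j'
  simp only [trA, Matrix.sum_apply, Matrix.of_apply]
  exact Finset.sum_comm

omit [DecidableEq α] [DecidableEq β] in
lemma trA_kron (A : Matrix α α ℂ) (B : Matrix β β ℂ) :
    trA (A ⊗ₖ B) = A.trace • B := by
  ext j j'
  simp [trA, Matrix.kroneckerMap_apply, trace_eq_diag_sum, Finset.sum_mul]

omit [Fintype α] [DecidableEq α] [Fintype β] [DecidableEq β] in
lemma kron_conjT_mul {a b c d : Type} [Fintype a] [Fintype b] [Fintype c] [Fintype d]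
    (A : Matrix a b ℂ) (B : Matrix c d ℂ) :
    (A ⊗ₖ B)ᴴ * (A ⊗ₖ B) = (Aᴴ * A) ⊗ₖ (Bᴴ * B) := by
  rw [kron_conjT, ← Matrix.mul_kronecker_mul]

omit [DecidableEq β] in
lemma blk_kron (x : β) (A : Matrix α α ℂ) (B : Matrix β β ℂ) :
    blk x (A ⊗ₖ B) = B x x • A := by
  ext k k'
  simp [blk, Matrix.kroneckerMap_apply, mul_comm]

lemma condMaj_step3 {a b N : ℕ} [NeZero a]
    (p : Fin N → ℝ)
    (σ : Fin N → Matrix (Fin a) (Fin a) ℂ) (τ : Fin N → Matrix (Fin b) (Fin b) ℂ)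
    (hσ : ∀ x, IsState (σ x)) (hτ : ∀ x, IsState (τ x)) :
    CondMaj ((Matrix.single (0 : Fin a) 0 (1:ℂ)) ⊗ₖ
        Matrix.diagonal (fun x => (p x : ℂ)))
      (∑ x, p x • (σ x ⊗ₖ τ x)) := by
  have ha1 : 1 ≤ a := Nat.one_le_iff_ne_zero.mpr (NeZero.ne a)
  -- square roots
  set S : Fin N → Matrix (Fin a) (Fin a) ℂ := fun x => (hσ x).1.sqrt with hSdef
  have hζpsd : ∀ x, ((((a:ℝ) - 1)⁻¹) •
      ((1 : Matrix (Fin a) (Fin a) ℂ) - σ x)).PosSemidef := fun x =>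
    PosSemidef.smul_real (one_sub_posSemidef (hσ x).1 (hσ x).2)
      (inv_nonneg.mpr (sub_nonneg.mpr (by exact_mod_cast ha1)))
  set T : Fin N → Matrix (Fin a) (Fin a) ℂ := fun x => (hζpsd x).sqrt with hTdef
  set R : Fin N → Matrix (Fin b) (Fin b) ℂ := fun x => (hτ x).1.sqrt with hRdef
  have hSS : ∀ x, S x * (S x)ᴴ = σ x := fun x => by
    rw [hSdef]; simp only
    rw [(hσ x).1.posSemidef_sqrt.isHermitian.eq, (hσ x).1.sqrt_mul_self]
  have hTT : ∀ x, T x * (T x)ᴴ = (((a:ℝ) - 1)⁻¹) •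
      ((1 : Matrix (Fin a) (Fin a) ℂ) - σ x) := fun x => by
    rw [hTdef]; simp only
    rw [(hζpsd x).posSemidef_sqrt.isHermitian.eq, (hζpsd x).sqrt_mul_self]
  have hRR : ∀ x, R x * (R x)ᴴ = τ x := fun x => by
    rw [hRdef]; simp only
    rw [(hτ x).1.posSemidef_sqrt.isHermitian.eq, (hτ x).1.sqrt_mul_self]
  -- the `a ≥ 2` facts
  have ha2 : Finset.univ.erase (0 : Fin a) ≠ ∅ → 2 ≤ a := by
    intro h
    obtain ⟨k, hk⟩ := Finset.nonempty_iff_ne_empty.mpr h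
    have hk0 : k ≠ 0 := Finset.ne_of_mem_erase hk
    by_contra hcon
    have : a = 1 := by omega
    subst this
    exact hk0 (Subsingleton.elim _ _)
  have hane : 2 ≤ a → ((a : ℂ) - 1) ≠ 0 := by
    intro h2
    have : (a : ℂ) ≠ 1 := by
      intro hc
      have : a = 1 := by exact_mod_cast hc
      omega
    exact sub_ne_zero.mpr this
  have hcast : 2 ≤ a → ((((a:ℝ) - 1)⁻¹ : ℝ) : ℂ) = ((a : ℂ) - 1)⁻¹ := by
    intro h2; push_cast; ring
  -- L1
  have hL1 : ∀ x, (((a - 1 : ℕ) : ℂ)) • (T x * (T x)ᴴ) =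
      (1 : Matrix (Fin a) (Fin a) ℂ) - σ x := by
    intro x
    rcases eq_or_lt_of_le ha1 with h1 | h2
    · -- a = 1
      have ha : a = 1 := h1.symm
      subst ha
      have : σ x = 1 := by
        have h := (hσ x)
        ext i j
        have hi : i = 0 := Subsingleton.elim _ _
        have hj : j = 0 := Subsingleton.elim _ _
        subst hi; subst hj
        have := h.2
        rw [trace_fin_one] at this
        simpa [Matrix.one_apply] using this
      simp [this]
    · have h2' : 2 ≤ a := h2
      rw [hTT x, real_smul_mat, smul_smul, hcast h2']
      rw [show ((a - 1 : ℕ) : ℂ) = (a : ℂ) - 1 by push_cast [Nat.cast_sub ha1]; ring]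
      rw [mul_inv_cancel₀ (hane h2'), one_smul]
  have hTtr : ∀ x, Finset.univ.erase (0 : Fin a) ≠ ∅ →
      ((T x)ᴴ * T x).trace = (1:ℂ) := by
    intro x h
    have h2 := ha2 h
    rw [Matrix.trace_mul_comm, hTT x, real_smul_mat, Matrix.trace_smul,
      Matrix.trace_sub, Matrix.trace_one, (hσ x).2]
    rw [hcast h2]
    simp only [smul_eq_mul, Fintype.card_fin]
    rw [inv_mul_cancel₀ (hane h2)]
  have hStr : ∀ x, ((S x)ᴴ * S x).trace = 1 := fun x => by
    rw [Matrix.trace_mul_comm, hSS x, (hσ x).2]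
  -- the Kraus family
  set famA : Fin N → (Fin a ⊕ Fin a × Fin a) → Matrix (Fin a) (Fin a) ℂ :=
    fun x => lamFam (S x) (T x) 0 with hfamA
  have hTPA : ∀ x, ∑ s, (famA x s)ᴴ * famA x s = 1 := fun x =>
    lambda_tp (S x) (T x) 0 (hStr x) (hTtr x)
  set F : (Fin N × Fin b × (Fin a ⊕ Fin a × Fin a)) →
      Matrix (Fin a × Fin b) (Fin a × Fin N) ℂ :=
    fun q => famA q.1 q.2.2 ⊗ₖ (R q.1 * Matrix.single q.2.1 q.1 (1:ℂ)) with hF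
  -- master formula
  have hNapp : ∀ Y, kraus F Y = ∑ x, kraus (famA x) (blk x Y) ⊗ₖ τ x := by
    intro Y
    unfold kraus
    rw [Fintype.sum_prod_type]
    refine Finset.sum_congr rfl fun x _ => ?_
    rw [Fintype.sum_prod_type]
    calc ∑ m' : Fin b, ∑ s, F (x, m', s) * Y * (F (x, m', s))ᴴ
        = ∑ m' : Fin b, ∑ s, (famA x s * blk x Y * (famA x s)ᴴ) ⊗ₖ
            (R x * Matrix.single m' m' (1:ℂ) * (R x)ᴴ) := by
          refine Finset.sum_congr rfl fun m' _ => Finset.sum_congr rfl fun s _ => ?_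
          exact kron_prep_conj (famA x s) (R x) m' x Y
      _ = ∑ m' : Fin b, (∑ s, famA x s * blk x Y * (famA x s)ᴴ) ⊗ₖ
            (R x * Matrix.single m' m' (1:ℂ) * (R x)ᴴ) := by
          refine Finset.sum_congr rfl fun m' _ => ?_
          rw [sum_kron]
      _ = (∑ s, famA x s * blk x Y * (famA x s)ᴴ) ⊗ₖ
            (R x * (∑ m' : Fin b, Matrix.single m' m' (1:ℂ)) * (R x)ᴴ) := by
          rw [Finset.mul_sum, Finset.sum_mul, kron_sum]
      _ = kraus (famA x) (blk x Y) ⊗ₖ τ x := by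
          rw [sum_stdBasis_diag, Matrix.mul_one, hRR x]
          rfl
  -- trace preservation
  have hTP : ∑ q, (F q)ᴴ * F q = 1 := by
    rw [Fintype.sum_prod_type]
    calc ∑ x : Fin N, ∑ ms : Fin b × (Fin a ⊕ Fin a × Fin a), (F (x, ms.1, ms.2))ᴴ * F (x, ms.1, ms.2)
        = ∑ x : Fin N, (1 : Matrix (Fin a) (Fin a) ℂ) ⊗ₖ
            Matrix.single x x (1:ℂ) := by
          refine Finset.sum_congr rfl fun x _ => ?_
          rw [Fintype.sum_prod_type]
          calc ∑ m' : Fin b, ∑ s, (F (x, m', s))ᴴ * F (x, m', s)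
              = ∑ m' : Fin b, ∑ s, ((famA x s)ᴴ * famA x s) ⊗ₖ
                  (((R x)ᴴ * R x) m' m' • Matrix.single x x (1:ℂ)) := by
                refine Finset.sum_congr rfl fun m' _ => Finset.sum_congr rfl fun s _ => ?_
                rw [hF]; simp only
                rw [kron_conjT_mul, prep_col_tp]
            _ = ∑ m' : Fin b, (1 : Matrix (Fin a) (Fin a) ℂ) ⊗ₖ
                  (((R x)ᴴ * R x) m' m' • Matrix.single x x (1:ℂ)) := by
                refine Finset.sum_congr rfl fun m' _ => ?_
                rw [← sum_kron, hTPA x]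
            _ = (1 : Matrix (Fin a) (Fin a) ℂ) ⊗ₖ
                  ((∑ m' : Fin b, ((R x)ᴴ * R x) m' m') • Matrix.single x x (1:ℂ)) := by
                rw [← kron_sum, ← Finset.sum_smul]
            _ = (1 : Matrix (Fin a) (Fin a) ℂ) ⊗ₖ Matrix.single x x (1:ℂ) := by
                have : ∑ m' : Fin b, ((R x)ᴴ * R x) m' m' = 1 := by
                  have h1 : ((R x)ᴴ * R x).trace = 1 := by
                    rw [Matrix.trace_mul_comm, hRR x, (hτ x).2]
                  rw [← trace_eq_diag_sum, h1]
                rw [this, one_smul]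
      _ = 1 := by
          rw [← kron_sum, sum_stdBasis_diag, Matrix.one_kronecker_one]
  -- lambda on E00
  have hlamE : ∀ x, kraus (famA x) (Matrix.single (0 : Fin a) 0 (1:ℂ)) = σ x := by
    intro x
    rw [hfamA]; simp only
    rw [lambda_apply, hSS x]
    rw [Matrix.single_apply_same]
    have : ∑ k ∈ Finset.univ.erase (0 : Fin a),
        Matrix.single (0 : Fin a) 0 (1:ℂ) k k = 0 := by
      refine Finset.sum_eq_zero fun k hk => ?_
      have hk0 : k ≠ 0 := Finset.ne_of_mem_erase hk
      simp [Matrix.single, Ne.symm hk0]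
    rw [this, zero_smul, add_zero, one_smul]
  -- lambda on 1 and unif
  have hlam1 : ∀ x, kraus (famA x) (1 : Matrix (Fin a) (Fin a) ℂ) = 1 := by
    intro x
    rw [hfamA]; simp only
    rw [lambda_apply, hSS x]
    have h1 : (1 : Matrix (Fin a) (Fin a) ℂ) 0 0 = 1 := Matrix.one_apply_eq _
    have h2 : ∑ k ∈ Finset.univ.erase (0 : Fin a),
        (1 : Matrix (Fin a) (Fin a) ℂ) k k = ((a - 1 : ℕ) : ℂ) := by
      rw [Finset.sum_congr rfl fun k _ => Matrix.one_apply_eq k]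
      rw [Finset.sum_const, Finset.card_erase_of_mem (Finset.mem_univ _)]
      simp
    rw [h1, h2, one_smul, hL1 x]
    abel
  have hlamu : ∀ x, kraus (famA x) (unif a) = unif a := by
    intro x
    rw [unif, (kraus_linear (famA x)).2, hlam1 x]
  -- conditional unitality
  have hCU : CondUnital (kraus F) := by
    intro ρB hρB
    refine ⟨∑ x, ρB x x • τ x, ⟨posSemidef_sum _ _ fun x _ =>
      PosSemidef.smul_nonneg (hτ x).1 (psd_diag_nonneg hρB.1 x), ?_⟩, ?_⟩
    · rw [Matrix.trace_sum]
      calc ∑ x, (ρB x x • τ x).trace = ∑ x, ρB x x := by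
            refine Finset.sum_congr rfl fun x _ => ?_
            rw [Matrix.trace_smul, (hτ x).2, smul_eq_mul, mul_one]
        _ = 1 := by rw [← trace_eq_diag_sum, hρB.2]
    · rw [hNapp]
      calc ∑ x, kraus (famA x) (blk x (unif a ⊗ₖ ρB)) ⊗ₖ τ x
          = ∑ x, ρB x x • (unif a ⊗ₖ τ x) := by
            refine Finset.sum_congr rfl fun x _ => ?_
            rw [blk_kron, (kraus_linear (famA x)).2, hlamu x,
              Matrix.smul_kronecker]
        _ = unif a ⊗ₖ ∑ x, ρB x x • τ x := by
            rw [kron_sum]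
            exact Finset.sum_congr rfl fun x _ => (Matrix.kronecker_smul _ _ _).symm
  -- semi-causality
  have hSC : SemiCausal (kraus F) := by
    intro M hM X
    have htrA : ∀ Y, trA (kraus F Y) = ∑ x, (blk x Y).trace • τ x := by
      intro Y
      rw [hNapp, trA_sum]
      refine Finset.sum_congr rfl fun x _ => ?_
      rw [trA_kron, kraus_trace (famA x) (hTPA x)]
    rw [htrA, htrA]
    refine Finset.sum_congr rfl fun x _ => ?_
    have hb : blk x (tensorIdRight N M X) = M (blk x X) := rfl
    rw [hb, hM.2.1]
  -- value on the initial state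
  have hval : kraus F ((Matrix.single (0 : Fin a) 0 (1:ℂ)) ⊗ₖ
      Matrix.diagonal (fun x => (p x : ℂ))) = ∑ x, p x • (σ x ⊗ₖ τ x) := by
    rw [hNapp]
    refine Finset.sum_congr rfl fun x _ => ?_
    rw [blk_kron, Matrix.diagonal_apply_eq, (kraus_linear (famA x)).2, hlamE x,
      Matrix.smul_kronecker, real_smul_mat]
  -- assemble
  left
  refine ⟨le_refl a, 1, kraus F, by simp, ⟨isChannel_kraus F hTP, hCU, hSC⟩, ?_⟩
  rw [Matrix.one_kronecker_one, Matrix.one_mul, Matrix.conjTranspose_one,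
    Matrix.mul_one, hval]

end Aux

/-- Every normalized conditional entropy is non-negative on separable states. -/
theorem condEntropy_nonneg_of_separable (E : CondEntropy) (hE : E.Normalized)
    (a b N : ℕ) (p : Fin N → ℝ) (hp : ∀ x, 0 ≤ p x) (hp1 : ∑ x, p x = 1)
    (σ : Fin N → Matrix (Fin a) (Fin a) ℂ) (τ : Fin N → Matrix (Fin b) (Fin b) ℂ)
    (hσ : ∀ x, IsState (σ x)) (hτ : ∀ x, IsState (τ x))
    (ρ : Matrix (Fin a × Fin b) (Fin a × Fin b) ℂ)
    (hρ : ρ = ∑ x, p x • (σ x ⊗ₖ τ x)) :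
    0 ≤ E.H a b ρ := by
  classical
  have hN : N ≠ 0 := by
    intro h
    subst h
    simpa using hp1
  have ha : a ≠ 0 := by
    intro h
    subst h
    have := (hσ ⟨0, Nat.pos_of_ne_zero hN⟩).2
    simp [Matrix.trace] at this
  haveI : NeZero a := ⟨ha⟩
  haveI : NeZero N := ⟨hN⟩
  set ω : Matrix (Fin N) (Fin N) ℂ := Matrix.diagonal (fun x => (p x : ℂ)) with hωdef
  have hωs : IsState ω := by
    constructor
    · exact Matrix.PosSemidef.diagonal (by
        intro x
        exact Complex.zero_le_real.mpr (hp x))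
    · rw [hωdef, Matrix.trace_diagonal]
      exact_mod_cast hp1
  have hω1 : IsState (unif 1 ⊗ₖ ω) := Aux.IsState.unif_kron one_ne_zero hωs
  have hE00 : IsState (Matrix.single (0 : Fin a) 0 (1:ℂ)) := by
    constructor
    · have h : Matrix.single (0 : Fin a) 0 (1:ℂ) =
          Matrix.single (0 : Fin a) 0 (1:ℂ) *
            (Matrix.single (0 : Fin a) 0 (1:ℂ))ᴴ := by
        rw [Aux.stdBasis_conjTranspose, Matrix.single_mul_single_same, mul_one]
      rw [h]
      exact Matrix.posSemidef_self_mul_conjTranspose _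
    · simp [Matrix.trace, Matrix.diag, Matrix.single, Finset.sum_ite_eq]
  have hξs : IsState ((Matrix.single (0 : Fin a) 0 (1:ℂ)) ⊗ₖ ω) :=
    Aux.IsState.kron hE00 hωs
  have hρs : IsState ρ := by
    rw [hρ]
    constructor
    · exact Aux.posSemidef_sum _ _ fun x _ =>
        Aux.PosSemidef.smul_real (Aux.posSemidef_kron (hσ x).1 (hτ x).1) (hp x)
    · rw [Matrix.trace_sum]
      calc ∑ x, (p x • (σ x ⊗ₖ τ x)).trace = ∑ x, ((p x : ℂ)) := by
            refine Finset.sum_congr rfl fun x _ => ?_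
            rw [Matrix.trace_smul, Matrix.trace_kronecker, (hσ x).2, (hτ x).2]
            simp [Complex.real_smul]
        _ = 1 := by exact_mod_cast hp1
  have h1 : E.H 1 N (unif 1 ⊗ₖ ω) = 0 := Aux.H_trivA_zero E _ hω1
  have h2 : E.H 1 N (unif 1 ⊗ₖ ω) ≤
      E.H a N ((Matrix.single (0 : Fin a) 0 (1:ℂ)) ⊗ₖ ω) :=
    E.mono 1 N a N _ _ hω1 hξs (Aux.condMaj_embed ω hωs)
  have h3 : E.H a N ((Matrix.single (0 : Fin a) 0 (1:ℂ)) ⊗ₖ ω) ≤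
      E.H a b ρ := by
    refine E.mono a N a b _ _ hξs hρs ?_
    rw [hρ, hωdef]
    exact Aux.condMaj_step3 p σ τ hσ hτ
  linarith
end
end

section
/- Let D^{(1)}, …, D^{(k)} be m×m doubly stochastic matrices and let 𝒟^{(j)} be the quantum channel on m×m matrices defined by 𝒟^{(j)}(ρ) := ∑_{x,x'} D^{(j)}_{x'x} ρ_{xx} E_{x'x'}, where ρ_{xx} are the diagonal entries of ρ and E_{x'x'} the diagonal matrix units. Let ℱ^{(1)}, …, ℱ^{(k)} be completely positive maps from n×n to n'×n' matrices such that ∑_{j=1}^k ℱ^{(j)} is trace-preserving. Then 𝒩 := ∑_{j=1}^k 𝒟^{(j)} ⊗ ℱ^{(j)} is a quantum channel from matrices on ℂ^m ⊗ ℂ^n to matrices on ℂ^m ⊗ ℂ^{n'} that is locally balanced, i.e., both conditionally unital and A ↛ B' semi-causal. -/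
open Matrix Kronecker BigOperators
open scoped ENNReal ComplexOrder

noncomputable section

section CdsHelpers

lemma dsChannel_apply {m : ℕ} (D : Matrix (Fin m) (Fin m) ℝ) (ρ : Matrix (Fin m) (Fin m) ℂ)
    (y y' : Fin m) :
    dsChannel D ρ y y' = if y = y' then ∑ x, ((D y x : ℝ) : ℂ) * ρ x x else 0 := by
  simp only [dsChannel, Matrix.sum_apply, Matrix.smul_apply, Matrix.single,
    Matrix.of_apply, smul_eq_mul, mul_ite, mul_one, mul_zero]
  by_cases h : y = y'
  · subst h
    simp [Finset.sum_ite_eq]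
  · simp only [h, if_false]
    refine Finset.sum_eq_zero fun x _ => Finset.sum_eq_zero fun x1 _ => ?_
    simp only [ite_eq_right_iff, and_imp]
    intro h1 h2; exact (h (h1.symm.trans h2)).elim

lemma dsChannel_std {m : ℕ} (D : Matrix (Fin m) (Fin m) ℝ) (kk k' y y' : Fin m) :
    dsChannel D (Matrix.single kk k' 1) y y' =
      if y = y' ∧ kk = k' then ((D y kk : ℝ) : ℂ) else 0 := by
  rw [dsChannel_apply]
  by_cases h : y = y'
  · simp only [h, if_true, true_and, Matrix.single, Matrix.of_apply,
      mul_ite, mul_one, mul_zero]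
    by_cases h2 : kk = k'
    · subst h2
      simp [Finset.sum_ite_eq]
    · rw [if_neg h2]
      refine Finset.sum_eq_zero fun x _ => ?_
      simp only [ite_eq_right_iff, and_imp]
      intro h3 h4; exact (h2 (h3.trans h4.symm)).elim
  · simp [h]
lemma tensorMap_ds_apply {m n n' : ℕ} (D : Matrix (Fin m) (Fin m) ℝ)
    (F : Matrix (Fin n) (Fin n) ℂ → Matrix (Fin n') (Fin n') ℂ)
    (X : Matrix (Fin m × Fin n) (Fin m × Fin n) ℂ) (y y' : Fin m) (b b' : Fin n') :
    tensorMap (dsChannel D) F X (y, b) (y', b') =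
      if y = y' then
        ∑ kk : Fin m, ((D y kk : ℝ) : ℂ) *
          ∑ l : Fin n, ∑ l' : Fin n, X (kk, l) (kk, l') * F (Matrix.single l l' 1) b b'
      else 0 := by
  simp only [tensorMap, Matrix.sum_apply, Matrix.smul_apply, Matrix.kroneckerMap_apply,
    smul_eq_mul, dsChannel_std]
  by_cases hy : y = y'
  · subst hy
    rw [if_pos rfl]
    simp only [true_and, mul_ite, ite_mul, mul_zero, zero_mul]
    refine Finset.sum_congr rfl fun kk _ => ?_
    rw [Finset.sum_comm]
    rw [Finset.mul_sum]
    refine Finset.sum_congr rfl fun l _ => ?_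
    rw [Finset.sum_comm, Finset.mul_sum]
    refine Finset.sum_congr rfl fun l' _ => ?_
    rw [Finset.sum_ite_eq Finset.univ kk
      (fun k' => X (kk, l) (k', l') * (((D y kk : ℝ):ℂ) * F (Matrix.single l l' 1) b b'))]
    simp [Finset.mem_univ]
    ring
  · rw [if_neg hy]
    refine Finset.sum_eq_zero fun kk _ => Finset.sum_eq_zero fun k' _ =>
      Finset.sum_eq_zero fun l _ => Finset.sum_eq_zero fun l' _ => ?_
    simp [hy]

lemma choiMatrix_apply {α β : Type} [Fintype α] [DecidableEq α] [Fintype β]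
    (N : Matrix α α ℂ → Matrix β β ℂ) (l l' : α) (b b' : β) :
    choiMatrix N (l, b) (l', b') = N (Matrix.single l l' 1) b b' := by
  simp only [choiMatrix, Matrix.sum_apply, Matrix.kroneckerMap_apply, Matrix.single,
    Matrix.of_apply, ite_mul, one_mul, zero_mul, ite_and]
  rw [Finset.sum_eq_single l]
  · rw [Finset.sum_eq_single l']
    · simp
    · intro j _ hj; simp [hj]
    · simp
  · intro i _ hi
    refine Finset.sum_eq_zero fun j _ => ?_
    simp [hi]
  · simp

lemma lin_decomp {n n' : ℕ} {F : Matrix (Fin n) (Fin n) ℂ → Matrix (Fin n') (Fin n') ℂ}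
    (hF : IsLinearMap ℂ F) (ρ : Matrix (Fin n) (Fin n) ℂ) :
    F ρ = ∑ l : Fin n, ∑ l' : Fin n, ρ l l' • F (Matrix.single l l' 1) := by
  let L := IsLinearMap.mk' F hF
  have hL : ∀ X, F X = L X := fun _ => rfl
  rw [hL]
  conv_lhs => rw [Matrix.matrix_eq_sum_single ρ]
  rw [map_sum]
  refine Finset.sum_congr rfl fun l _ => ?_
  rw [map_sum]
  refine Finset.sum_congr rfl fun l' _ => ?_
  have : Matrix.single l l' (ρ l l') = ρ l l' • Matrix.single l l' (1:ℂ) := by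
    ext i j
    simp only [Matrix.single, Matrix.of_apply, Matrix.smul_apply, smul_eq_mul]
    split <;> simp
  rw [this, _root_.map_smul, hL]

lemma quad_sum {ι β : Type} [Fintype β] (s : Finset ι) (f : ι → Matrix β β ℂ) (w : β → ℂ) :
    star w ⬝ᵥ ((∑ i ∈ s, f i) *ᵥ w) = ∑ i ∈ s, star w ⬝ᵥ (f i *ᵥ w) := by
  have : (∑ i ∈ s, f i) *ᵥ w = ∑ i ∈ s, f i *ᵥ w := by
    ext b
    simp only [Matrix.mulVec, dotProduct, Matrix.sum_apply, Finset.sum_apply, Finset.sum_mul]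
    exact Finset.sum_comm
  rw [this]
  simp only [dotProduct, Finset.sum_apply, Finset.mul_sum]
  exact Finset.sum_comm

lemma quad_smul {β : Type} [Fintype β] (c : ℂ) (A : Matrix β β ℂ) (w : β → ℂ) :
    star w ⬝ᵥ ((c • A) *ᵥ w) = c * (star w ⬝ᵥ (A *ᵥ w)) := by
  rw [Matrix.smul_mulVec, dotProduct_smul, smul_eq_mul]

lemma quad_kron {n n' : ℕ} (F : Matrix (Fin n) (Fin n) ℂ → Matrix (Fin n') (Fin n') ℂ)
    (c : Fin n → ℂ) (w : Fin n' → ℂ) :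
    star (fun p : Fin n × Fin n' => c p.1 * w p.2) ⬝ᵥ
        (choiMatrix F *ᵥ fun p : Fin n × Fin n' => c p.1 * w p.2)
      = ∑ l : Fin n, ∑ l' : Fin n, star (c l) * c l' *
          (star w ⬝ᵥ (F (Matrix.single l l' 1) *ᵥ w)) := by
  simp only [dotProduct, mulVec, Pi.star_apply, Fintype.sum_prod_type, choiMatrix_apply,
    star_mul', Finset.mul_sum]
  refine Finset.sum_congr rfl fun l _ => ?_
  rw [Finset.sum_comm]
  refine Finset.sum_congr rfl fun l' _ => Finset.sum_congr rfl fun b _ =>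
    Finset.sum_congr rfl fun b' _ => ?_
  ring

lemma cp_psd {n n' : ℕ} {F : Matrix (Fin n) (Fin n) ℂ → Matrix (Fin n') (Fin n') ℂ}
    (hF : IsLinearMap ℂ F) (hcp : (choiMatrix F).PosSemidef)
    {ρ : Matrix (Fin n) (Fin n) ℂ} (hρ : ρ.PosSemidef) : (F ρ).PosSemidef := by
  have hchoi : ∀ (l l' : Fin n) (b b' : Fin n'),
      star (F (Matrix.single l' l 1) b' b) = F (Matrix.single l l' 1) b b' := by
    intro l l' b b'
    have := congrFun (congrFun hcp.1 (l, b)) (l', b')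
    rw [Matrix.conjTranspose_apply, choiMatrix_apply, choiMatrix_apply] at this
    exact this
  refine Matrix.PosSemidef.of_dotProduct_mulVec_nonneg ?_ ?_
  · ext b b'
    rw [Matrix.conjTranspose_apply, lin_decomp hF]
    simp only [Matrix.sum_apply, Matrix.smul_apply, smul_eq_mul, star_sum, star_mul']
    rw [Finset.sum_comm]
    refine Finset.sum_congr rfl fun l _ => Finset.sum_congr rfl fun l' _ => ?_
    rw [hchoi]
    congr 1
    have := congrFun (congrFun hρ.1 l) l'
    rw [Matrix.conjTranspose_apply] at this
    exact this
  · intro w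
    obtain ⟨B, hB⟩ : ∃ B : Matrix (Fin n) (Fin n) ℂ, ρ = Bᴴ * B := by
      open scoped MatrixOrder in
      obtain ⟨B, hB⟩ := CStarAlgebra.nonneg_iff_eq_star_mul_self.mp hρ.nonneg
      exact ⟨B, hB⟩
    have hent : ∀ l l', ρ l l' = ∑ s, star (B s l) * B s l' := by
      intro l l'
      rw [hB]
      simp [Matrix.mul_apply, Matrix.conjTranspose_apply]
    have key : star w ⬝ᵥ (F ρ *ᵥ w)
        = ∑ s, star (fun p : Fin n × Fin n' => B s p.1 * w p.2) ⬝ᵥ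
            (choiMatrix F *ᵥ fun p : Fin n × Fin n' => B s p.1 * w p.2) :=
      calc star w ⬝ᵥ (F ρ *ᵥ w)
          = ∑ l : Fin n, ∑ l' : Fin n, ρ l l' *
              (star w ⬝ᵥ (F (Matrix.single l l' 1) *ᵥ w)) := by
            rw [lin_decomp hF, quad_sum]
            simp only [quad_sum, quad_smul]
        _ = ∑ s : Fin n, ∑ l : Fin n, ∑ l' : Fin n, star (B s l) * B s l' *
              (star w ⬝ᵥ (F (Matrix.single l l' 1) *ᵥ w)) := by
            simp only [hent, Finset.sum_mul]
            have e1 : ∀ l : Fin n, (∑ l' : Fin n, ∑ s : Fin n, star (B s l) * B s l' *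
                (star w ⬝ᵥ (F (Matrix.single l l' 1) *ᵥ w)))
                = ∑ s : Fin n, ∑ l' : Fin n, star (B s l) * B s l' *
                (star w ⬝ᵥ (F (Matrix.single l l' 1) *ᵥ w)) :=
              fun l => Finset.sum_comm
            simp only [e1]
            exact Finset.sum_comm
        _ = ∑ s, star (fun p : Fin n × Fin n' => B s p.1 * w p.2) ⬝ᵥ
            (choiMatrix F *ᵥ fun p : Fin n × Fin n' => B s p.1 * w p.2) :=
          Finset.sum_congr rfl fun s _ => (quad_kron F (fun x => B s x) w).symm
    rw [key]
    exact Finset.sum_nonneg fun s _ => hcp.dotProduct_mulVec_nonneg _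

lemma tensorMap_isLinear {m m' n n' : ℕ}
    (M : Matrix (Fin m) (Fin m) ℂ → Matrix (Fin m') (Fin m') ℂ)
    (F : Matrix (Fin n) (Fin n) ℂ → Matrix (Fin n') (Fin n') ℂ) :
    IsLinearMap ℂ (tensorMap M F) := by
  constructor
  · intro X Y
    simp only [tensorMap, Matrix.add_apply, add_smul, Finset.sum_add_distrib]
  · intro c X
    simp only [tensorMap, Matrix.smul_apply, smul_eq_mul, smul_smul, Finset.smul_sum]

lemma stdBasis_trace {n : ℕ} (l l' : Fin n) :
    (Matrix.single l l' (1:ℂ)).trace = if l = l' then 1 else 0 := by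
  simp only [Matrix.trace, Matrix.diag, Matrix.single, Matrix.of_apply]
  by_cases h : l = l'
  · subst h; simp [Finset.sum_ite_eq]
  · rw [if_neg h]
    refine Finset.sum_eq_zero fun x _ => ?_
    simp only [ite_eq_right_iff, and_imp]
    intro h1 h2; exact (h (h1.symm ▸ h2.symm ▸ rfl)).elim

lemma dsChannel_trace_std {m : ℕ} {D : Matrix (Fin m) (Fin m) ℝ} (hD : IsDoublyStochastic D)
    (kk k' : Fin m) :
    (dsChannel D (Matrix.single kk k' 1)).trace = if kk = k' then 1 else 0 := by
  simp only [Matrix.trace, Matrix.diag, dsChannel_std, eq_self_iff_true, true_and]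
  rw [Finset.sum_ite_irrel]
  simp only [Finset.sum_const_zero]
  split
  · rw [← Complex.ofReal_sum, hD.2.2 kk, Complex.ofReal_one]
  · rfl

lemma tensorMap_ds_trace {m n n' : ℕ} {D : Matrix (Fin m) (Fin m) ℝ} (hD : IsDoublyStochastic D)
    (F : Matrix (Fin n) (Fin n) ℂ → Matrix (Fin n') (Fin n') ℂ)
    (X : Matrix (Fin m × Fin n) (Fin m × Fin n) ℂ) :
    (tensorMap (dsChannel D) F X).trace
      = ∑ l : Fin n, ∑ l' : Fin n, (∑ kk : Fin m, X (kk, l) (kk, l')) *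
          (F (Matrix.single l l' 1)).trace := by
  simp only [tensorMap, Matrix.trace_sum, Matrix.trace_smul, Matrix.trace_kronecker,
    smul_eq_mul, dsChannel_trace_std hD, ite_mul, one_mul, zero_mul, mul_ite, mul_zero,
    Finset.sum_ite_irrel, Finset.sum_const_zero, Finset.sum_ite_eq, Finset.mem_univ, if_true]
  rw [Finset.sum_comm]
  refine Finset.sum_congr rfl fun l _ => ?_
  rw [Finset.sum_comm]
  refine Finset.sum_congr rfl fun l' _ => ?_
  rw [Finset.sum_mul]

lemma choiT_apply {m n n' : ℕ} (D : Matrix (Fin m) (Fin m) ℝ)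
    (F : Matrix (Fin n) (Fin n) ℂ → Matrix (Fin n') (Fin n') ℂ)
    (kk : Fin m) (l : Fin n) (y : Fin m) (b : Fin n')
    (k' : Fin m) (l' : Fin n) (y' : Fin m) (b' : Fin n') :
    choiMatrix (tensorMap (dsChannel D) F) ((kk, l), (y, b)) ((k', l'), (y', b'))
      = if y = y' ∧ kk = k' then
          ((D y kk : ℝ) : ℂ) * F (Matrix.single l l' 1) b b' else 0 := by
  rw [choiMatrix_apply, tensorMap_ds_apply]
  by_cases hy : y = y'
  · rw [if_pos hy]
    simp only [hy, true_and]
    simp only [Matrix.single, Matrix.of_apply, Prod.mk.injEq, ite_mul, one_mul,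
      zero_mul, mul_ite, mul_zero, ite_and, Finset.sum_ite_irrel, Finset.sum_const_zero,
      Finset.sum_ite_eq, Finset.mem_univ, if_true]
    by_cases hk : kk = k'
    · subst hk; rfl
    · rw [if_neg (fun h => hk h.symm), if_neg hk]
  · rw [if_neg hy, if_neg (fun h => hy h.1)]

lemma psd_sum {β ι : Type} [Fintype β] (s : Finset ι) (f : ι → Matrix β β ℂ)
    (h : ∀ i ∈ s, (f i).PosSemidef) : (∑ i ∈ s, f i).PosSemidef := by
  classical
  induction s using Finset.induction_on with
  | empty => simpa using Matrix.PosSemidef.zero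
  | @insert a t ha ih =>
    rw [Finset.sum_insert ha]
    exact (h _ (Finset.mem_insert_self _ _)).add
      (ih fun i hi => h i (Finset.mem_insert_of_mem hi))

lemma choiMatrix_sum {α β ι : Type} [Fintype α] [DecidableEq α] [Fintype β]
    (s : Finset ι) (T : ι → Matrix α α ℂ → Matrix β β ℂ) :
    choiMatrix (fun X => ∑ i ∈ s, T i X) = ∑ i ∈ s, choiMatrix (T i) := by
  ext p q
  simp only [choiMatrix, Matrix.sum_apply, Matrix.kroneckerMap_apply, Finset.mul_sum]
  have hsw : ∀ (g : α → α → ι → ℂ), (∑ i₁ : α, ∑ j₁ : α, ∑ i ∈ s, g i₁ j₁ i)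
      = ∑ i ∈ s, ∑ i₁ : α, ∑ j₁ : α, g i₁ j₁ i := by
    intro g
    have h1 : ∀ i₁ : α, (∑ j₁ : α, ∑ i ∈ s, g i₁ j₁ i) = ∑ i ∈ s, ∑ j₁ : α, g i₁ j₁ i :=
      fun _ => Finset.sum_comm
    simp only [h1]
    exact Finset.sum_comm
  exact hsw _

lemma choiT_psd {m n n' : ℕ} {D : Matrix (Fin m) (Fin m) ℝ} (hDnn : ∀ x x', 0 ≤ D x x')
    {F : Matrix (Fin n) (Fin n) ℂ → Matrix (Fin n') (Fin n') ℂ}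
    (hcp : (choiMatrix F).PosSemidef) :
    (choiMatrix (tensorMap (dsChannel D) F)).PosSemidef := by
  have hchoi : ∀ (l l' : Fin n) (b b' : Fin n'),
      star (F (Matrix.single l' l 1) b' b) = F (Matrix.single l l' 1) b b' := by
    intro l l' b b'
    have := congrFun (congrFun hcp.1 (l, b)) (l', b')
    rw [Matrix.conjTranspose_apply, choiMatrix_apply, choiMatrix_apply] at this
    exact this
  refine Matrix.PosSemidef.of_dotProduct_mulVec_nonneg ?_ ?_
  · ext ⟨⟨kk, l⟩, ⟨y, b⟩⟩ ⟨⟨k', l'⟩, ⟨y', b'⟩⟩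
    rw [Matrix.conjTranspose_apply, choiT_apply, choiT_apply]
    by_cases h : y = y' ∧ kk = k'
    · obtain ⟨h1, h2⟩ := h
      subst h1; subst h2
      rw [if_pos ⟨rfl, rfl⟩, if_pos ⟨rfl, rfl⟩, star_mul']
      simp only [Complex.star_def, Complex.conj_ofReal, hchoi]
    · rw [if_neg h, if_neg (fun hc => h ⟨hc.1.symm, hc.2.symm⟩), star_zero]
  · intro v
    have key : star v ⬝ᵥ (choiMatrix (tensorMap (dsChannel D) F) *ᵥ v)
        = ∑ kk : Fin m, ∑ y : Fin m, ((D y kk : ℝ) : ℂ) *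
            (star (fun p : Fin n × Fin n' => v ((kk, p.1), (y, p.2))) ⬝ᵥ
              (choiMatrix F *ᵥ fun p : Fin n × Fin n' => v ((kk, p.1), (y, p.2)))) := by
      simp only [dotProduct, mulVec, Pi.star_apply, Fintype.sum_prod_type, choiMatrix_apply,
        tensorMap_ds_apply, Matrix.single, Matrix.of_apply, Prod.mk.injEq, one_mul,
        ite_and, ite_mul, zero_mul, mul_ite, mul_zero, mul_one,
        Finset.sum_ite_irrel, Finset.sum_const_zero, Finset.sum_ite_eq, Finset.sum_ite_eq',
        Finset.mem_univ, if_true, Finset.mul_sum]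
      refine Finset.sum_congr rfl fun kk _ => ?_
      rw [Finset.sum_comm]
      refine Finset.sum_congr rfl fun y _ => Finset.sum_congr rfl fun l _ =>
        Finset.sum_congr rfl fun b _ => Finset.sum_congr rfl fun l' _ =>
        Finset.sum_congr rfl fun b' _ => ?_
      ring
    rw [key]
    refine Finset.sum_nonneg fun kk _ => Finset.sum_nonneg fun y _ => ?_
    exact mul_nonneg (by exact_mod_cast hDnn y kk) (hcp.dotProduct_mulVec_nonneg _)

lemma F_entry {n n' : ℕ} {F : Matrix (Fin n) (Fin n) ℂ → Matrix (Fin n') (Fin n') ℂ}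
    (hF : IsLinearMap ℂ F) (ρ : Matrix (Fin n) (Fin n) ℂ) (b b' : Fin n') :
    F ρ b b' = ∑ l : Fin n, ∑ l' : Fin n, ρ l l' * F (Matrix.single l l' 1) b b' := by
  rw [lin_decomp hF]
  simp [Matrix.sum_apply, Matrix.smul_apply]

theorem cds_locallyBalanced' {m n n' k : ℕ}
    (D : Fin k → Matrix (Fin m) (Fin m) ℝ) (hD : ∀ j, IsDoublyStochastic (D j))
    (F : Fin k → (Matrix (Fin n) (Fin n) ℂ → Matrix (Fin n') (Fin n') ℂ))
    (hFlin : ∀ j, IsLinearMap ℂ (F j))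
    (hFcp : ∀ j, (choiMatrix (F j)).PosSemidef)
    (hFtp : ∀ X : Matrix (Fin n) (Fin n) ℂ, (∑ j, F j X).trace = X.trace) :
    IsChannel (fun X => ∑ j, tensorMap (dsChannel (D j)) (F j) X) ∧
    CondUnital (fun X => ∑ j, tensorMap (dsChannel (D j)) (F j) X) ∧
    SemiCausal (fun X => ∑ j, tensorMap (dsChannel (D j)) (F j) X) := by
  have hlin : IsLinearMap ℂ (fun X => ∑ j, tensorMap (dsChannel (D j)) (F j) X) := by
    constructor
    · intro X Y
      rw [← Finset.sum_add_distrib]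
      exact Finset.sum_congr rfl fun j _ => (tensorMap_isLinear _ _).1 X Y
    · intro c X
      rw [Finset.smul_sum]
      exact Finset.sum_congr rfl fun j _ => (tensorMap_isLinear _ _).2 c X
  have hstdtr : ∀ l l' : Fin n, (∑ j, (F j (Matrix.single l l' 1)).trace)
      = if l = l' then 1 else 0 := by
    intro l l'
    rw [← Matrix.trace_sum, hFtp, stdBasis_trace]
  have htr : ∀ X : Matrix (Fin m × Fin n) (Fin m × Fin n) ℂ,
      (∑ j, tensorMap (dsChannel (D j)) (F j) X).trace = X.trace := by
    intro X
    rw [Matrix.trace_sum]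
    have h1 : ∀ j, (tensorMap (dsChannel (D j)) (F j) X).trace
        = ∑ l : Fin n, ∑ l' : Fin n, (∑ kk : Fin m, X (kk, l) (kk, l')) *
            (F j (Matrix.single l l' 1)).trace := fun j => tensorMap_ds_trace (hD j) _ X
    simp only [h1]
    rw [Finset.sum_comm]
    have h2 : ∀ l : Fin n, (∑ j, ∑ l' : Fin n, (∑ kk : Fin m, X (kk, l) (kk, l')) *
        (F j (Matrix.single l l' 1)).trace)
        = ∑ l' : Fin n, ∑ j, (∑ kk : Fin m, X (kk, l) (kk, l')) *
        (F j (Matrix.single l l' 1)).trace := fun l => Finset.sum_comm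
    simp only [h2, ← Finset.mul_sum, hstdtr, mul_ite, mul_one, mul_zero,
      Finset.sum_ite_eq, Finset.mem_univ, if_true]
    rw [Matrix.trace, Fintype.sum_prod_type]
    simp only [Matrix.diag]
    exact Finset.sum_comm
  have hpsd : (choiMatrix (fun X => ∑ j, tensorMap (dsChannel (D j)) (F j) X)).PosSemidef := by
    rw [choiMatrix_sum Finset.univ (fun j => tensorMap (dsChannel (D j)) (F j))]
    exact psd_sum _ _ fun j _ => choiT_psd (hD j).1 (hFcp j)
  refine ⟨⟨hlin, htr, hpsd⟩, ?_, ?_⟩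
  · -- CondUnital
    intro ρ hρ
    refine ⟨∑ j, F j ρ, ⟨psd_sum _ _ fun j _ => cp_psd (hFlin j) (hFcp j) hρ.1,
      by rw [hFtp ρ, hρ.2]⟩, ?_⟩
    ext ⟨y, b⟩ ⟨y', b'⟩
    simp only [Matrix.sum_apply, tensorMap_ds_apply, Matrix.kroneckerMap_apply, unif,
      Matrix.smul_apply, smul_eq_mul, Matrix.one_apply, Finset.sum_ite_irrel,
      Finset.sum_const_zero, if_true, eq_self_iff_true, mul_ite, mul_one, mul_zero,
      ite_mul, zero_mul]
    by_cases hy : y = y'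
    · rw [if_pos hy, if_pos hy]
      rw [Finset.mul_sum]
      refine Finset.sum_congr rfl fun j _ => ?_
      have hrow : (∑ kk : Fin m, ((D j y kk : ℝ) : ℂ)) = 1 := by
        rw [← Complex.ofReal_sum, (hD j).2.1 y, Complex.ofReal_one]
      rw [← Finset.sum_mul, hrow, one_mul, F_entry (hFlin j), Finset.mul_sum]
      refine Finset.sum_congr rfl fun l _ => ?_
      rw [Finset.mul_sum]
      refine Finset.sum_congr rfl fun l' _ => ?_
      ring
    · rw [if_neg hy, if_neg hy]
  · -- SemiCausal
    intro M hM X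
    have trA_form : ∀ (X : Matrix (Fin m × Fin n) (Fin m × Fin n) ℂ) (b b' : Fin n'),
        trA (∑ j, tensorMap (dsChannel (D j)) (F j) X) b b'
          = ∑ j, ∑ l : Fin n, ∑ l' : Fin n, (∑ kk : Fin m, X (kk, l) (kk, l')) *
              F j (Matrix.single l l' 1) b b' := by
      intro X b b'
      simp only [trA, Matrix.of_apply, Matrix.sum_apply, tensorMap_ds_apply,
        eq_self_iff_true, if_true]
      rw [Finset.sum_comm]
      refine Finset.sum_congr rfl fun j _ => ?_
      rw [Finset.sum_comm]
      have hcol : ∀ kk : Fin m, (∑ y : Fin m, ((D j y kk : ℝ) : ℂ)) = 1 := by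
        intro kk
        rw [← Complex.ofReal_sum, (hD j).2.2 kk, Complex.ofReal_one]
      have h3 : ∀ kk : Fin m, (∑ y : Fin m, ((D j y kk : ℝ) : ℂ) *
          (∑ l : Fin n, ∑ l' : Fin n, X (kk, l) (kk, l') *
            F j (Matrix.single l l' 1) b b'))
          = ∑ l : Fin n, ∑ l' : Fin n, X (kk, l) (kk, l') *
            F j (Matrix.single l l' 1) b b' := by
        intro kk
        rw [← Finset.sum_mul, hcol, one_mul]
      simp only [h3]
      rw [Finset.sum_comm]
      refine Finset.sum_congr rfl fun l _ => ?_
      rw [Finset.sum_comm]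
      refine Finset.sum_congr rfl fun l' _ => ?_
      rw [Finset.sum_mul]
    ext b b'
    rw [trA_form, trA_form]
    refine Finset.sum_congr rfl fun j _ => Finset.sum_congr rfl fun l _ =>
      Finset.sum_congr rfl fun l' _ => ?_
    congr 1
    have hMtr := hM.2.1 (Matrix.of fun kk k' => X (kk, l) (k', l'))
    rw [Matrix.trace, Matrix.trace] at hMtr
    simpa [tensorIdRight, Matrix.diag, Matrix.of_apply] using hMtr

end CdsHelpers

/-- A conditionally doubly stochastic channel `∑ j, 𝒟⁽ʲ⁾ ⊗ ℱ⁽ʲ⁾` is a quantum channel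
that is locally balanced, i.e. both conditionally unital and semi-causal. -/
theorem cds_locallyBalanced {m n n' k : ℕ}
    (D : Fin k → Matrix (Fin m) (Fin m) ℝ) (hD : ∀ j, IsDoublyStochastic (D j))
    (F : Fin k → (Matrix (Fin n) (Fin n) ℂ → Matrix (Fin n') (Fin n') ℂ))
    (hFlin : ∀ j, IsLinearMap ℂ (F j))
    (hFcp : ∀ j, (choiMatrix (F j)).PosSemidef)
    (hFtp : ∀ X : Matrix (Fin n) (Fin n) ℂ, (∑ j, F j X).trace = X.trace) :
    IsChannel (fun X => ∑ j, tensorMap (dsChannel (D j)) (F j) X) ∧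
    CondUnital (fun X => ∑ j, tensorMap (dsChannel (D j)) (F j) X) ∧
    SemiCausal (fun X => ∑ j, tensorMap (dsChannel (D j)) (F j) X) :=
  cds_locallyBalanced' D hD F hFlin hFcp hFtp
end
end
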